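/- arXiv:0903.2906 — 4 statements merged into one kernel-verified Lean document; each statement's English description precedes it below -/
import Mathlib

section
/- Let T be a finite tree rooted at ρ with k subtrees T_1,...,T_k attached to the root. Then the cut-width of T satisfies E(T) ≤ max over i of (E(T_i) + k + 1 - i), where the subtrees may be reordered arbitrarily (i.e., for any permutation of the subtrees this bound holds with the corresponding ordering). -/
open scoped Classical

/-- The cut-width of a finite simple graph: the minimum over vertex orderings of the
maximum number of edges crossing any prefix/suffix cut. -/
noncomputable def cutWidth {V : Type*} [Fintype V] (G : SimpleGraph V) : ℕ :=
  ⨅ π : Fin (Fintype.card V) ≃ V,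
    (Finset.range (Fintype.card V)).sup fun i =>
      (Finset.univ.filter fun p : V × V =>
        G.Adj p.1 p.2 ∧ (π.symm p.1 : ℕ) ≤ i ∧ i < (π.symm p.2 : ℕ)).card

lemma cutWidth_exists_opt {V : Type*} [Fintype V] (G : SimpleGraph V) :
    ∃ e : Fin (Fintype.card V) ≃ V,
      ((Finset.range (Fintype.card V)).sup fun i =>
        (Finset.univ.filter fun p : V × V =>
          G.Adj p.1 p.2 ∧ (e.symm p.1 : ℕ) ≤ i ∧ i < (e.symm p.2 : ℕ)).card)
      = cutWidth G := by
  have hne : Nonempty (Fin (Fintype.card V) ≃ V) := ⟨(Fintype.equivFin V).symm⟩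
  have h := Nat.sInf_mem (Set.range_nonempty
    (fun e : Fin (Fintype.card V) ≃ V =>
      (Finset.range (Fintype.card V)).sup fun i =>
        (Finset.univ.filter fun p : V × V =>
          G.Adj p.1 p.2 ∧ (e.symm p.1 : ℕ) ≤ i ∧ i < (e.symm p.2 : ℕ)).card))
  exact h

lemma cutWidth_le_of_equiv {V : Type*} [Fintype V] (G : SimpleGraph V)
    (e : Fin (Fintype.card V) ≃ V) :
    cutWidth G ≤ (Finset.range (Fintype.card V)).sup fun i =>
      (Finset.univ.filter fun p : V × V =>
        G.Adj p.1 p.2 ∧ (e.symm p.1 : ℕ) ≤ i ∧ i < (e.symm p.2 : ℕ)).card :=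
  ciInf_le (OrderBot.bddBelow _) e

/-- If `T` is a finite tree rooted at `ρ` whose `k` subtrees attached to the
root are given (in an arbitrary order) by the parts `part⁻¹(i)` of `V \ {ρ}`, then
`cutWidth T ≤ max_i (cutWidth T_i + k + 1 - i)` (with subtrees indexed `1,…,k`;
here `i : Fin k` is 0-indexed so the bound reads `cutWidth T_i + k - i`). -/
theorem cutwidth_tree_le {W : Type*} [Fintype W] [DecidableEq W]
    (T : SimpleGraph W) (hT : T.IsTree) (ρ : W) (k : ℕ) (part : W → Fin k)
    (hin : ∀ u v, u ≠ ρ → v ≠ ρ → T.Adj u v → part u = part v)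
    (hroot : ∀ i : Fin k, ∃! v, T.Adj ρ v ∧ part v = i) :
    cutWidth T ≤ Finset.univ.sup (fun i : Fin k =>
      cutWidth (T.induce {w | w ≠ ρ ∧ part w = i}) + k - (i : ℕ)) := by
  rcases Nat.eq_zero_or_pos k with hk0 | hk0
  · exact (hk0 ▸ part ρ : Fin 0).elim0
  set S : Fin k → Set W := fun i => {w | w ≠ ρ ∧ part w = i} with hS
  -- optimal orderings of subtrees
  choose π' hπ' using fun i : Fin k => cutWidth_exists_opt (T.induce (S i))
  set N : Fin k → ℕ := fun i => Fintype.card ↥(S i) with hN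
  set Nf : ℕ → ℕ := fun j => if h : j < k then N ⟨j, h⟩ else 0 with hNf
  set offset : ℕ → ℕ := fun m => 1 + ∑ j ∈ Finset.range m, Nf j with hoffset
  have hNfi : ∀ i : Fin k, Nf (i : ℕ) = N i := by
    intro i; simp [hNf, i.isLt]
  have hoffsucc : ∀ m, offset (m + 1) = offset m + Nf m := by
    intro m; simp [hoffset, Finset.sum_range_succ]; ring
  have hoffmono : Monotone offset := by
    intro a b hab
    simp only [hoffset]
    have := Finset.sum_le_sum_of_subset (f := Nf)
      (Finset.range_subset_range.mpr hab)
    omega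
  have hoff1 : ∀ m, 1 ≤ offset m := by intro m; simp [hoffset]
  -- position function
  set pos : W → ℕ := fun w =>
    if h : w = ρ then 0 else
      offset (part w) + ((π' (part w)).symm ⟨w, ⟨h, rfl⟩⟩ : ℕ) with hpos
  have hpos0 : pos ρ = 0 := by simp [hpos]
  have hposS : ∀ (i : Fin k) (w : W) (h : w ∈ S i),
      pos w = offset (i : ℕ) + ((π' i).symm ⟨w, h⟩ : ℕ) := by
    intro i w h
    obtain ⟨h1, h2⟩ := h
    subst h2
    simp only [hpos, dif_neg h1]
  have hmemS : ∀ w : W, w ≠ ρ → w ∈ S (part w) := fun w h => ⟨h, rfl⟩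
  have hposblock : ∀ w : W, w ≠ ρ →
      offset (part w) ≤ pos w ∧ pos w < offset ((part w : ℕ) + 1) := by
    intro w h
    rw [hposS (part w) w (hmemS w h)]
    have hr : (((π' (part w)).symm ⟨w, hmemS w h⟩ : Fin (N (part w))) : ℕ) < N (part w) :=
      Fin.is_lt _
    rw [hoffsucc, hNfi]
    omega
  have hposne : ∀ w : W, w ≠ ρ → 1 ≤ pos w := by
    intro w h
    have := (hposblock w h).1
    have := hoff1 (part w)
    omega
  have hposlt : ∀ w : W, pos w < offset k := by
    intro w
    by_cases h : w = ρ
    · subst h; rw [hpos0]; exact hoff1 k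
    · have h2 := (hposblock w h).2
      have h3 : offset ((part w : ℕ) + 1) ≤ offset k := hoffmono (part w).isLt
      omega
  have hblockeq : ∀ (i j : Fin k) (t : ℕ), offset i ≤ t → t < offset ((i : ℕ) + 1) →
      offset j ≤ t → t < offset ((j : ℕ) + 1) → i = j := by
    intro i j t hi1 hi2 hj1 hj2
    rcases lt_trichotomy (i : ℕ) (j : ℕ) with h | h | h
    · have : offset ((i : ℕ) + 1) ≤ offset j := hoffmono h
      omega
    · exact Fin.ext h
    · have : offset ((j : ℕ) + 1) ≤ offset i := hoffmono h
      omega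
  have hinj : Function.Injective pos := by
    intro u v huv
    by_cases hu : u = ρ <;> by_cases hv : v = ρ
    · rw [hu, hv]
    · exfalso; have := hposne v hv; rw [hu, hpos0] at huv; omega
    · exfalso; have := hposne u hu; rw [hv, hpos0] at huv; omega
    · have hbu := hposblock u hu
      have hbv := hposblock v hv
      have hj : part u = part v := by
        rcases lt_trichotomy ((part u : ℕ)) ((part v : ℕ)) with h | h | h
        · have : offset ((part u : ℕ) + 1) ≤ offset (part v) := hoffmono h
          omega
        · exact Fin.ext h
        · have : offset ((part v : ℕ) + 1) ≤ offset (part u) := hoffmono h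
          omega
      have hmu : u ∈ S (part u) := hmemS u hu
      have hmv : v ∈ S (part u) := ⟨hv, hj.symm⟩
      rw [hposS (part u) u hmu, hposS (part u) v hmv] at huv
      have : (π' (part u)).symm ⟨u, hmu⟩ = (π' (part u)).symm ⟨v, hmv⟩ :=
        Fin.ext (by omega)
      have := (π' (part u)).symm.injective this
      exact congrArg Subtype.val this
  -- total cardinality
  have hMcard : ∀ i : Fin k,
      N i = (Finset.univ.filter fun w => w ≠ ρ ∧ part w = i).card := by
    intro i
    rw [hN]
    rw [← Fintype.card_coe (Finset.univ.filter fun w => w ≠ ρ ∧ part w = i)]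
    exact Fintype.card_congr (Equiv.subtypeEquivRight (fun w => by
      simp [hS, Set.mem_setOf_eq]))
  have hcard : Fintype.card W = offset k := by
    have h1 : (Finset.univ.filter fun w : W => w = ρ).card
        + (Finset.univ.filter fun w : W => ¬ w = ρ).card = Fintype.card W := by
      rw [Finset.card_filter_add_card_filter_not, Finset.card_univ]
    have h2 : (Finset.univ.filter fun w : W => w = ρ).card = 1 := by
      rw [Finset.filter_eq']
      simp
    have h3 : (Finset.univ.filter fun w : W => ¬ w = ρ).card
        = ∑ i : Fin k, (Finset.univ.filter fun w => w ≠ ρ ∧ part w = i).card := by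
      rw [Finset.card_eq_sum_card_fiberwise
        (f := part) (t := Finset.univ) (fun x _ => Finset.mem_univ _)]
      refine Finset.sum_congr rfl fun i _ => ?_
      rw [Finset.filter_filter]
    have h4 : ∑ j ∈ Finset.range k, Nf j = ∑ i : Fin k, N i := by
      rw [← Fin.sum_univ_eq_sum_range Nf k]
      exact Finset.sum_congr rfl fun i _ => hNfi i
    have h5 : ∑ i : Fin k, N i
        = ∑ i : Fin k, (Finset.univ.filter fun w => w ≠ ρ ∧ part w = i).card :=
      Finset.sum_congr rfl fun i _ => hMcard i
    simp only [hoffset]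
    omega
  -- the global ordering
  have hposlt' : ∀ w : W, pos w < Fintype.card W := by
    intro w; rw [hcard]; exact hposlt w
  have hbij : Function.Bijective (fun w : W => (⟨pos w, hposlt' w⟩ : Fin (Fintype.card W))) := by
    rw [Fintype.bijective_iff_injective_and_card]
    constructor
    · intro u v h
      exact hinj (congrArg Fin.val h)
    · simp
  set e : W ≃ Fin (Fintype.card W) := Equiv.ofBijective _ hbij with he
  refine le_trans (cutWidth_le_of_equiv T e.symm) ?_
  rw [Finset.sup_le_iff]
  intro t ht
  rw [Finset.mem_range] at ht
  have hesymm : ∀ w : W, ((e.symm.symm w : Fin (Fintype.card W)) : ℕ) = pos w :=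
    fun w => rfl
  -- injectivity of part on crossing root-edges
  have hrootinj : ∀ p q : W × W, p.1 = ρ → q.1 = ρ → T.Adj p.1 p.2 → T.Adj q.1 q.2 →
      part p.2 = part q.2 → p = q := by
    intro p q hp hq hap haq hpq
    have h1 : p.2 = q.2 := by
      have := (hroot (part q.2)).unique (y₁ := p.2) (y₂ := q.2)
        ⟨by rwa [hp] at hap, hpq⟩ ⟨by rwa [hq] at haq, rfl⟩
      exact this
    exact Prod.ext (hp.trans hq.symm) h1
  by_cases ht1 : t = 0
  -- cut right after the root
  · subst ht1
    have hsub : ∀ p : W × W, (T.Adj p.1 p.2 ∧ (e.symm.symm p.1 : ℕ) ≤ 0 ∧ 0 < (e.symm.symm p.2 : ℕ)) →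
        p.1 = ρ := by
      intro p hp
      by_contra hne
      have := hposne p.1 hne
      rw [hesymm p.1] at hp
      omega
    have hb : (Finset.univ.filter fun p : W × W =>
        T.Adj p.1 p.2 ∧ (e.symm.symm p.1 : ℕ) ≤ 0 ∧ 0 < (e.symm.symm p.2 : ℕ)).card
        ≤ k := by
      have := Finset.card_le_card_of_injOn (fun p : W × W => part p.2)
        (s := Finset.univ.filter fun p : W × W =>
          T.Adj p.1 p.2 ∧ (e.symm.symm p.1 : ℕ) ≤ 0 ∧ 0 < (e.symm.symm p.2 : ℕ))
        (t := Finset.univ) (fun a _ => Finset.mem_univ _) ?_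
      · simpa using this
      · intro p hp q hq hpq
        simp only [Finset.coe_filter, Set.mem_setOf_eq, Finset.mem_univ, true_and] at hp hq
        exact hrootinj p q (hsub p hp) (hsub q hq) hp.1 hq.1 hpq
    refine le_trans hb (le_trans ?_ (Finset.le_sup (Finset.mem_univ (⟨0, hk0⟩ : Fin k))))
    simp
  -- cut strictly inside a block
  · have ht1' : 1 ≤ t := Nat.one_le_iff_ne_zero.mpr ht1
    have htoff : t < offset k := by rw [← hcard]; exact ht
    obtain ⟨i, hi1, hi2⟩ : ∃ i : Fin k, offset (i : ℕ) ≤ t ∧ t < offset ((i : ℕ) + 1) := by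
      have hj0 : offset 0 ≤ t := by simpa [hoffset] using ht1'
      have hjspec : offset (Nat.findGreatest (fun m => offset m ≤ t) k) ≤ t :=
        Nat.findGreatest_spec (P := fun m => offset m ≤ t) (Nat.zero_le k) hj0
      have hjle : Nat.findGreatest (fun m => offset m ≤ t) k ≤ k :=
        Nat.findGreatest_le k
      have hjk : Nat.findGreatest (fun m => offset m ≤ t) k < k := by
        rcases Nat.lt_or_ge (Nat.findGreatest (fun m => offset m ≤ t) k) k with h | h
        · exact h
        · exfalso
          have h' : Nat.findGreatest (fun m => offset m ≤ t) k = k := le_antisymm hjle h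
          rw [h'] at hjspec; omega
      have hnext : ¬ offset (Nat.findGreatest (fun m => offset m ≤ t) k + 1) ≤ t :=
        Nat.findGreatest_is_greatest (P := fun m => offset m ≤ t)
          (Nat.lt_succ_self _) hjk
      refine ⟨⟨Nat.findGreatest (fun m => offset m ≤ t) k, hjk⟩, hjspec, ?_⟩
      show t < offset (Nat.findGreatest (fun m => offset m ≤ t) k + 1)
      omega
    set A : Finset (W × W) := Finset.univ.filter fun p : W × W =>
      T.Adj p.1 p.2 ∧ (e.symm.symm p.1 : ℕ) ≤ t ∧ t < (e.symm.symm p.2 : ℕ) with hA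
    have hsplit : (A.filter fun p => p.1 = ρ).card + (A.filter fun p => ¬ p.1 = ρ).card
        = A.card := Finset.card_filter_add_card_filter_not _
    -- root edges crossing
    have hb1 : (A.filter fun p => p.1 = ρ).card ≤ k - (i : ℕ) := by
      have hIci : (Finset.univ.filter fun j : Fin k => (i : ℕ) ≤ (j : ℕ)).card = k - (i : ℕ) := by
        have : (Finset.univ.filter fun j : Fin k => (i : ℕ) ≤ (j : ℕ)) = Finset.Ici i := by
          ext j
          simp only [Finset.mem_filter, Finset.mem_univ, true_and, Finset.mem_Ici, Fin.le_def]
        rw [this, Fin.card_Ici]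
      rw [← hIci]
      refine Finset.card_le_card_of_injOn (fun p : W × W => part p.2) ?_ ?_
      · intro p hp
        have hp : p ∈ A.filter (fun p => p.1 = ρ) := hp
        simp only [hA, Finset.mem_filter, Finset.mem_univ, true_and] at hp
        obtain ⟨⟨hadj, hle, hlt⟩, hp1⟩ := hp
        rw [hesymm] at hlt
        have hp2 : p.2 ≠ ρ := by
          intro h; rw [h, hpos0] at hlt; omega
        have hb := hposblock p.2 hp2
        show part p.2 ∈ Finset.univ.filter fun j : Fin k => (i : ℕ) ≤ (j : ℕ)
        simp only [Finset.mem_filter, Finset.mem_univ, true_and]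
        by_contra hc
        push_neg at hc
        have : offset ((part p.2 : ℕ) + 1) ≤ offset (i : ℕ) := hoffmono hc
        omega
      · intro p hp q hq hpq
        simp only [hA, Finset.coe_filter, Set.mem_setOf_eq, Finset.mem_filter,
          Finset.mem_univ, true_and] at hp hq
        exact hrootinj p q hp.2 hq.2 hp.1.1 hq.1.1 hpq
    -- internal edges crossing
    have hb2 : (A.filter fun p => ¬ p.1 = ρ).card ≤ cutWidth (T.induce (S i)) := by
      have hm : t - offset (i : ℕ) < N i := by
        have := hoffsucc (i : ℕ)
        rw [hNfi] at this
        omega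
      obtain ⟨v0, hv0, -⟩ := hroot i
      have hv0' : (v0 : W) ∈ S i := ⟨hv0.1.ne', hv0.2⟩
      set f : W × W → ↥(S i) × ↥(S i) := fun p =>
        if h : p.1 ∈ S i ∧ p.2 ∈ S i then (⟨p.1, h.1⟩, ⟨p.2, h.2⟩)
        else (⟨v0, hv0'⟩, ⟨v0, hv0'⟩) with hf
      have hmemA : ∀ p : W × W, p ∈ A.filter (fun p => ¬ p.1 = ρ) →
          (p.1 ∈ S i ∧ p.2 ∈ S i) ∧ T.Adj p.1 p.2 ∧ pos p.1 ≤ t ∧ t < pos p.2 := by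
        intro p hp
        simp only [hA, Finset.mem_filter, Finset.mem_univ, true_and] at hp
        obtain ⟨⟨hadj, hle, hlt⟩, hp1⟩ := hp
        rw [hesymm] at hle hlt
        have hp2 : p.2 ≠ ρ := by
          intro h; rw [h, hpos0] at hlt; omega
        have hj : part p.1 = part p.2 := hin _ _ hp1 hp2 hadj
        have hb1' := hposblock p.1 hp1
        have hb2' := hposblock p.2 hp2
        have hpi : part p.1 = i := by
          refine (hblockeq (part p.1) i t ?_ ?_ hi1 hi2).symm.symm
          · omega
          · rw [hj]; omega
        exact ⟨⟨⟨hp1, hpi⟩, ⟨hp2, hj ▸ hpi⟩⟩, hadj, hle, hlt⟩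
      refine le_trans (Finset.card_le_card_of_injOn f
        (t := Finset.univ.filter fun q : ↥(S i) × ↥(S i) =>
          (T.induce (S i)).Adj q.1 q.2 ∧ ((π' i).symm q.1 : ℕ) ≤ t - offset (i : ℕ)
            ∧ t - offset (i : ℕ) < ((π' i).symm q.2 : ℕ)) ?_ ?_) ?_
      · intro p hp
        show f p ∈ Finset.univ.filter fun q : ↥(S i) × ↥(S i) =>
          (T.induce (S i)).Adj q.1 q.2 ∧ ((π' i).symm q.1 : ℕ) ≤ t - offset (i : ℕ)
            ∧ t - offset (i : ℕ) < ((π' i).symm q.2 : ℕ)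
        obtain ⟨hmem, hadj, hle, hlt⟩ := hmemA p hp
        simp only [hf, dif_pos hmem, Finset.mem_filter, Finset.mem_univ, true_and]
        refine ⟨hadj, ?_, ?_⟩
        · have := hposS i p.1 hmem.1
          omega
        · have := hposS i p.2 hmem.2
          omega
      · intro p hp q hq hpq
        have hmp := (hmemA p hp).1
        have hmq := (hmemA q hq).1
        simp only [hf, dif_pos hmp, dif_pos hmq, Prod.mk.injEq, Subtype.mk.injEq] at hpq
        exact Prod.ext hpq.1 hpq.2
      · rw [← hπ' i]
        exact Finset.le_sup (f := fun m =>
          (Finset.univ.filter fun p : ↥(S i) × ↥(S i) =>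
            (T.induce (S i)).Adj p.1 p.2 ∧ ((π' i).symm p.1 : ℕ) ≤ m
              ∧ m < ((π' i).symm p.2 : ℕ)).card)
          (Finset.mem_range.mpr (show t - offset (i : ℕ) < Fintype.card ↥(S i) from hm))
    have hfinal : A.card ≤ cutWidth (T.induce (S i)) + k - (i : ℕ) := by
      have hik : (i : ℕ) ≤ k := le_of_lt i.isLt
      omega
    exact le_trans hfinal (Finset.le_sup (f := fun i : Fin k =>
      cutWidth (T.induce {w | w ≠ ρ ∧ part w = i}) + k - (i : ℕ)) (Finset.mem_univ i))
end

section
/- Let Z_r denote the total number of vertices in the first r generations (including the root, generation 0) of a Galton–Watson branching process with Poisson(d) offspring distribution, d > 1. Then for every t > 0, sup over r of E[exp(t·Z_r·d^{-r})] is finite. -/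
open MeasureTheory ProbabilityTheory
open scoped NNReal ENNReal

/-- The set of vertices (in Ulam–Harris labeling by finite sequences) in generation `r`
of the Galton–Watson tree with offspring numbers `N u ω`. -/
noncomputable def gwGen {Ω : Type*} (N : List ℕ → Ω → ℕ) (ω : Ω) : ℕ → Finset (List ℕ)
  | 0 => {([] : List ℕ)}
  | r + 1 => (gwGen N ω r).biUnion fun u =>
      (Finset.range (N u ω)).image fun j => u ++ [j]

/-- All vertices in the first `ℓ` generations (generations `0,…,ℓ`) of the
Galton–Watson tree. -/
noncomputable def gwTree {Ω : Type*} (N : List ℕ → Ω → ℕ) (ω : Ω) (ℓ : ℕ) :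
    Finset (List ℕ) :=
  (Finset.range (ℓ + 1)).biUnion (gwGen N ω)

namespace GWaux


lemma exp_sub_one_le {z : ℝ} (hz : 0 ≤ z) : Real.exp z - 1 ≤ z * Real.exp z := by
  have h := Real.add_one_le_exp (-z)
  have h2 := mul_le_mul_of_nonneg_right h (Real.exp_pos z).le
  rw [← Real.exp_add] at h2
  simp only [neg_add_cancel, Real.exp_zero] at h2
  nlinarith

noncomputable def gseq (D s : ℝ) : ℕ → ℝ → ℝ
  | 0 => fun a => s + a
  | (r+1) => fun a => gseq D s r (D * (Real.exp (s + a) - 1))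

lemma gseq_succ (D s : ℝ) (r : ℕ) (a : ℝ) :
    gseq D s (r+1) a = gseq D s r (D * (Real.exp (s + a) - 1)) := rfl

lemma gseq_succ' (D s : ℝ) (r : ℕ) (a : ℝ) :
    gseq D s (r+1) a = s + D * (Real.exp (gseq D s r a) - 1) := by
  induction r generalizing a with
  | zero => simp [gseq]
  | succ r ih => rw [gseq_succ D s (r+1), ih, gseq_succ]

noncomputable def bfun (D s : ℝ) (r : ℕ) : ℝ := gseq D s r 0

lemma bfun_zero (D s : ℝ) : bfun D s 0 = s := by simp [bfun, gseq]

lemma bfun_succ (D s : ℝ) (r : ℕ) :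
    bfun D s (r+1) = s + D * (Real.exp (bfun D s r) - 1) := gseq_succ' D s r 0

lemma bfun_nonneg {D s : ℝ} (hD : 0 ≤ D) (hs : 0 ≤ s) (r : ℕ) : 0 ≤ bfun D s r := by
  induction r with
  | zero => simpa [bfun_zero]
  | succ r ih =>
    rw [bfun_succ]
    have : (0:ℝ) ≤ Real.exp (bfun D s r) - 1 := by
      have := Real.one_le_exp ih; linarith
    positivity

section analysis

variable {D : ℝ} (hD : 1 < D)

noncomputable def cseq (D : ℝ) (r : ℕ) : ℝ := ∑ k ∈ Finset.range (r+1), (1/D)^k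

lemma cseq_zero (D : ℝ) : cseq D 0 = 1 := by simp [cseq]

lemma cseq_succ (D : ℝ) (r : ℕ) : cseq D (r+1) = cseq D r + (1/D)^(r+1) := by
  simp [cseq, Finset.sum_range_succ]

include hD

lemma cseq_one_le (r : ℕ) : 1 ≤ cseq D r := by
  induction r with
  | zero => simp [cseq_zero]
  | succ r ih =>
    rw [cseq_succ]
    have : (0:ℝ) < (1/D)^(r+1) := by positivity
    linarith

lemma cseq_le (r : ℕ) : cseq D r ≤ D / (D - 1) := by
  have hD0 : (0:ℝ) < D := by linarith
  have hx1 : (1/D : ℝ) < 1 := by rw [div_lt_one hD0]; linarith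
  have key : cseq D r = (1 - (1/D)^(r+1)) / (1 - 1/D) := by
    rw [cseq, geom_sum_eq hx1.ne (r+1), ← neg_sub, ← neg_sub (1:ℝ) (1/D), neg_div_neg_eq]
  rw [key]
  have h1 : (0:ℝ) < 1 - 1/D := by linarith
  have h2 : (1:ℝ) - (1/D)^(r+1) ≤ 1 := by
    have : (0:ℝ) ≤ (1/D)^(r+1) := by positivity
    linarith
  calc (1 - (1/D)^(r+1)) / (1 - 1/D) ≤ 1 / (1 - 1/D) := by gcongr
    _ = D / (D - 1) := by
        rw [show (1:ℝ) - 1/D = (D-1)/D by field_simp]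
        rw [one_div_div]

lemma bfun_small (r : ℕ) :
    ∀ x : ℝ, 0 ≤ x → x ≤ (D-1)^2/(D*Real.exp 1) →
      bfun D (x / D^r) r ≤ cseq D r * x * Real.exp ((D*Real.exp 1/(D-1)^2) * x) := by
  have hD0 : (0:ℝ) < D := by linarith
  have hD1 : (0:ℝ) < D - 1 := by linarith
  set lam : ℝ := D*Real.exp 1/(D-1)^2 with hlam
  have hlam0 : 0 < lam := by positivity
  induction r with
  | zero =>
    intro x hx0 hxT
    rw [pow_zero, div_one, bfun_zero, cseq_zero, one_mul]
    nlinarith [Real.one_le_exp (mul_nonneg hlam0.le hx0)]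
  | succ r ih =>
    intro x hx0 hxT
    have hxd0 : 0 ≤ x / D := by positivity
    have hxdT : x / D ≤ (D-1)^2/(D*Real.exp 1) := by
      calc x / D ≤ x := by
            rw [div_le_iff₀ hD0]; nlinarith
        _ ≤ _ := hxT
    have hIH := ih (x / D) hxd0 hxdT
    have harg : x / D / D ^ r = x / D ^ (r+1) := by
      rw [div_div, pow_succ']
    rw [harg] at hIH
    set z : ℝ := cseq D r * (x/D) * Real.exp (lam * (x/D)) with hz
    have hcr1 : 1 ≤ cseq D r := cseq_one_le hD r
    have hcr0 : (0:ℝ) ≤ cseq D r := by linarith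
    have hz0 : 0 ≤ z := by positivity
    have hb0 : 0 ≤ bfun D (x / D^(r+1)) r :=
      bfun_nonneg hD0.le (by positivity) r
    have h1 : Real.exp (bfun D (x / D^(r+1)) r) - 1 ≤ z * Real.exp z := by
      have e1 : Real.exp (bfun D (x / D^(r+1)) r) ≤ Real.exp z := Real.exp_le_exp.2 hIH
      have e2 := exp_sub_one_le hz0
      linarith
    have hDz : D * (z * Real.exp z) = cseq D r * x * Real.exp (lam * (x/D) + z) := by
      rw [Real.exp_add, hz]
      field_simp
    -- exponent bound : lam*(x/D) + z ≤ lam * x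
    have hexpo : lam * (x/D) + z ≤ lam * x := by
      have hcr : cseq D r ≤ D/(D-1) := cseq_le hD r
      have hE : Real.exp (lam * (x/D)) ≤ Real.exp 1 := by
        apply Real.exp_le_exp.2
        have hlamT : lam * ((D-1)^2/(D*Real.exp 1)) = 1 := by
          rw [hlam]; field_simp
        calc lam * (x/D) ≤ lam * x := by
              apply mul_le_mul_of_nonneg_left _ hlam0.le
              rw [div_le_iff₀ hD0]; nlinarith
          _ ≤ lam * ((D-1)^2/(D*Real.exp 1)) := mul_le_mul_of_nonneg_left hxT hlam0.le
          _ = 1 := hlamT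
      have hzB : z ≤ Real.exp 1/(D-1) * x := by
        have step : z ≤ D/(D-1) * (x/D) * Real.exp 1 := by
          calc z ≤ D/(D-1) * (x/D) * Real.exp (lam * (x/D)) := by
                apply mul_le_mul_of_nonneg_right _ (Real.exp_pos _).le
                exact mul_le_mul_of_nonneg_right hcr hxd0
            _ ≤ D/(D-1) * (x/D) * Real.exp 1 := by
                apply mul_le_mul_of_nonneg_left hE (by positivity)
        have expand : D/(D-1) * (x/D) * Real.exp 1 = Real.exp 1/(D-1) * x := by
          field_simp
        linarith [step, expand.le]
      have hcoef : lam / D + Real.exp 1/(D-1) = lam := by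
        rw [hlam]; field_simp; ring
      have hco2 : x * (lam/D) + x * (Real.exp 1/(D-1)) = x * lam := by
        linear_combination x * hcoef
      have hzx : x * (Real.exp 1/(D-1)) = Real.exp 1/(D-1) * x := by ring
      have h3 : lam * (x/D) = x * (lam/D) := by ring
      linarith [hzB]
    have hcx : 0 ≤ cseq D r * x := by positivity
    calc bfun D (x / D^(r+1)) (r+1)
        = x / D^(r+1) + D * (Real.exp (bfun D (x / D^(r+1)) r) - 1) := bfun_succ D _ r
      _ ≤ x / D^(r+1) + D * (z * Real.exp z) := by
          have := mul_le_mul_of_nonneg_left h1 hD0.le; linarith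
      _ = x / D^(r+1) + cseq D r * x * Real.exp (lam * (x/D) + z) := by rw [hDz]
      _ ≤ (1/D)^(r+1) * x * Real.exp (lam * x) + cseq D r * x * Real.exp (lam * x) := by
          have hA : x / D^(r+1) ≤ (1/D)^(r+1) * x * Real.exp (lam * x) := by
            have h1' : x / D^(r+1) = (1/D)^(r+1) * x := by
              rw [div_pow, one_pow]; ring
            rw [h1']
            have he : (1:ℝ) ≤ Real.exp (lam * x) := Real.one_le_exp (by positivity)
            have hp : (0:ℝ) ≤ (1/D)^(r+1)*x := by positivity
            nlinarith [mul_le_mul_of_nonneg_left he hp]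
          have hB : cseq D r * x * Real.exp (lam * (x/D) + z)
              ≤ cseq D r * x * Real.exp (lam * x) :=
            mul_le_mul_of_nonneg_left (Real.exp_le_exp.2 hexpo) hcx
          linarith
      _ = cseq D (r+1) * x * Real.exp (lam * x) := by rw [cseq_succ]; ring

lemma bfun_boot : ∀ n : ℕ, ∀ x : ℝ, 0 ≤ x → x ≤ (D-1)^2/(D*Real.exp 1) * D^n →
    ∃ B : ℝ, ∀ r : ℕ, bfun D (x / D^r) r ≤ B := by
  have hD0 : (0:ℝ) < D := by linarith
  have hD1 : (0:ℝ) < D - 1 := by linarith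
  intro n
  induction n with
  | zero =>
    intro x hx0 hxT
    rw [pow_zero, mul_one] at hxT
    set lam : ℝ := D*Real.exp 1/(D-1)^2 with hlam
    refine ⟨D/(D-1) * x * Real.exp (lam * x), fun r => ?_⟩
    have h := bfun_small hD r x hx0 hxT
    have hcr : cseq D r ≤ D/(D-1) := cseq_le hD r
    have : cseq D r * x * Real.exp (lam * x) ≤ D/(D-1) * x * Real.exp (lam * x) := by
      apply mul_le_mul_of_nonneg_right _ (Real.exp_pos _).le
      exact mul_le_mul_of_nonneg_right hcr hx0
    linarith
  | succ n ih =>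
    intro x hx0 hxT
    by_cases hcase : x ≤ (D-1)^2/(D*Real.exp 1) * D^n
    · exact ih x hx0 hcase
    · obtain ⟨B', hB'⟩ := ih (x/D) (by positivity) (by
        rw [div_le_iff₀ hD0]
        calc x ≤ (D-1)^2/(D*Real.exp 1) * D^(n+1) := hxT
          _ = (D-1)^2/(D*Real.exp 1) * D^n * D := by ring)
      refine ⟨max x (x + D * Real.exp B'), fun r => ?_⟩
      cases r with
      | zero => rw [pow_zero, div_one, bfun_zero]; exact le_max_left _ _
      | succ r =>
        rw [bfun_succ]
        have hb := hB' r
        rw [show (x/D) / D^r = x / D^(r+1) by rw [div_div, ← pow_succ']] at hb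
        have h1 : Real.exp (bfun D (x / D^(r+1)) r) ≤ Real.exp B' := Real.exp_le_exp.2 hb
        have h2 : x / D^(r+1) ≤ x := by
          rw [div_le_iff₀ (by positivity)]
          nlinarith [one_le_pow₀ hD.le (n := r+1), hx0]
        have h3 : D * (Real.exp (bfun D (x / D^(r+1)) r) - 1) ≤ D * Real.exp B' := by
          have : Real.exp (bfun D (x / D^(r+1)) r) - 1 ≤ Real.exp B' := by linarith
          exact mul_le_mul_of_nonneg_left this hD0.le
        calc x / D^(r+1) + D * (Real.exp (bfun D (x / D^(r+1)) r) - 1)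
            ≤ x + D * Real.exp B' := by linarith
          _ ≤ _ := le_max_right _ _

lemma bfun_bound (t : ℝ) (ht : 0 < t) :
    ∃ B : ℝ, ∀ r : ℕ, bfun D (t / D^r) r ≤ B := by
  have hD1 : (0:ℝ) < D - 1 := by linarith
  obtain ⟨n, hn⟩ := pow_unbounded_of_one_lt (t * (D*Real.exp 1) / (D-1)^2) hD
  apply bfun_boot hD n t ht.le
  rw [div_mul_eq_mul_div, le_div_iff₀ (by positivity)]
  rw [div_lt_iff₀ (by positivity)] at hn
  nlinarith

end analysis



variable {Ω : Type*} (N : List ℕ → Ω → ℕ)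

lemma gwGen_zero (ω : Ω) : gwGen N ω 0 = {([] : List ℕ)} := rfl

lemma gwGen_succ (ω : Ω) (r : ℕ) : gwGen N ω (r+1) =
    (gwGen N ω r).biUnion fun u => (Finset.range (N u ω)).image fun j => u ++ [j] := rfl

lemma length_of_mem_gwGen (ω : Ω) : ∀ r, ∀ u ∈ gwGen N ω r, u.length = r := by
  intro r
  induction r with
  | zero => intro u hu; rw [gwGen_zero, Finset.mem_singleton] at hu; simp [hu]
  | succ r ih =>
    intro u hu
    rw [gwGen_succ, Finset.mem_biUnion] at hu
    obtain ⟨v, hv, hu⟩ := hu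
    rw [Finset.mem_image] at hu
    obtain ⟨j, _, rfl⟩ := hu
    simp [ih v hv]

lemma gwTree_zero (ω : Ω) : gwTree N ω 0 = {([] : List ℕ)} := by
  simp [gwTree, gwGen_zero]

lemma gwTree_succ (ω : Ω) (r : ℕ) :
    gwTree N ω (r+1) = gwGen N ω (r+1) ∪ gwTree N ω r := by
  rw [gwTree, gwTree, Finset.range_add_one, Finset.biUnion_insert]

lemma length_le_of_mem_gwTree (ω : Ω) (r : ℕ) (u : List ℕ) (hu : u ∈ gwTree N ω r) :
    u.length ≤ r := by
  rw [gwTree, Finset.mem_biUnion] at hu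
  obtain ⟨k, hk, hu⟩ := hu
  rw [Finset.mem_range] at hk
  rw [length_of_mem_gwGen N ω k u hu]
  omega

lemma card_gwTree_succ (ω : Ω) (r : ℕ) :
    (gwTree N ω (r+1)).card = (gwTree N ω r).card + (gwGen N ω (r+1)).card := by
  rw [gwTree_succ, Finset.card_union_of_disjoint, add_comm]
  rw [Finset.disjoint_left]
  intro u hu hu'
  have h1 := length_of_mem_gwGen N ω (r+1) u hu
  have h2 := length_le_of_mem_gwTree N ω r u hu'
  omega

lemma card_gwTree_zero (ω : Ω) : (gwTree N ω 0).card = 1 := by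
  rw [gwTree_zero]; rfl

lemma card_gwGen_zero (ω : Ω) : (gwGen N ω 0).card = 1 := rfl

/-- the next generation's size is the sum of the offspring numbers over generation `r`. -/
lemma card_gwGen_succ (ω : Ω) (r : ℕ) :
    (gwGen N ω (r+1)).card = ∑ u ∈ gwGen N ω r, N u ω := by
  rw [gwGen_succ, Finset.card_biUnion]
  · refine Finset.sum_congr rfl fun u _ => ?_
    rw [Finset.card_image_of_injective _ (fun j j' h => by
      simpa using List.append_cancel_left h), Finset.card_range]
  · intro u hu v hv huv
    rw [Function.onFun, Finset.disjoint_left]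
    rintro x hx hx'
    rw [Finset.mem_image] at hx hx'
    obtain ⟨j, _, rfl⟩ := hx
    obtain ⟨j', _, h⟩ := hx'
    have hlen : u.length = v.length := by
      rw [length_of_mem_gwGen N ω r u hu, length_of_mem_gwGen N ω r v hv]
    exact huv ((List.append_inj_left h.symm hlen) ▸ rfl)

section meas

variable {m : MeasurableSpace Ω}

lemma measurableSet_gwGen_eq :
    ∀ (r : ℕ), (∀ u : List ℕ, u.length < r → Measurable[m] (N u)) →
    ∀ T : Finset (List ℕ), MeasurableSet[m] {ω | gwGen N ω r = T} := by
  intro r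
  induction r with
  | zero =>
    intro _ T
    by_cases hT : ({([] : List ℕ)} : Finset (List ℕ)) = T
    · have : {ω : Ω | gwGen N ω 0 = T} = Set.univ := by
        ext ω; simp [gwGen_zero, hT]
      rw [this]; exact MeasurableSet.univ
    · have : {ω : Ω | gwGen N ω 0 = T} = ∅ := by
        ext ω; simp [gwGen_zero, hT]
      rw [this]; exact MeasurableSet.empty
  | succ r ih =>
    intro h T
    have key : {ω : Ω | gwGen N ω (r+1) = T} =
        ⋃ (S : Finset (List ℕ)), ⋃ (_ : ∀ u ∈ S, u.length = r),
          ({ω : Ω | gwGen N ω r = S} ∩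
            {ω : Ω | S.biUnion (fun u => (Finset.range (N u ω)).image fun j => u ++ [j]) = T}) := by
      ext ω
      simp only [Set.mem_iUnion, Set.mem_inter_iff, Set.mem_setOf_eq]
      constructor
      · intro hω
        exact ⟨gwGen N ω r, length_of_mem_gwGen N ω r, rfl, by rw [← gwGen_succ, hω]⟩
      · rintro ⟨S, _, h1, h2⟩
        rw [gwGen_succ, h1, h2]
    rw [key]
    refine MeasurableSet.iUnion fun S => MeasurableSet.iUnion fun hS => ?_
    refine (ih (fun u hu => h u (by omega)) S).inter ?_
    have hrepr : {ω : Ω | S.biUnion (fun u => (Finset.range (N u ω)).image fun j => u ++ [j]) = T}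
        = (fun ω (u : ↥S) => N u.1 ω) ⁻¹'
          {c : ↥S → ℕ | S.attach.biUnion
            (fun u => (Finset.range (c u)).image fun j => u.1 ++ [j]) = T} := by
      ext ω
      simp only [Set.mem_setOf_eq, Set.mem_preimage]
      have : S.biUnion (fun u => (Finset.range (N u ω)).image fun j => u ++ [j])
          = S.attach.biUnion (fun u => (Finset.range (N u.1 ω)).image fun j => u.1 ++ [j]) := by
        ext x; simp
      rw [this]
    rw [hrepr]
    have hvec : Measurable[m] (fun ω (u : ↥S) => N u.1 ω) :=
      measurable_pi_lambda _ (fun u => h u.1 (by rw [hS u.1 u.2]; omega))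
    exact hvec (Set.to_countable _).measurableSet

lemma measurable_card_gwGen (r : ℕ) (h : ∀ u : List ℕ, u.length < r → Measurable[m] (N u)) :
    Measurable[m] (fun ω => (gwGen N ω r).card) := by
  apply measurable_to_countable'
  intro n
  have : (fun ω => (gwGen N ω r).card) ⁻¹' {n} =
      ⋃ (T : Finset (List ℕ)), ⋃ (_ : T.card = n), {ω : Ω | gwGen N ω r = T} := by
    ext ω
    simp only [Set.mem_preimage, Set.mem_singleton_iff, Set.mem_iUnion, Set.mem_setOf_eq]
    constructor
    · intro hω; exact ⟨gwGen N ω r, hω, rfl⟩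
    · rintro ⟨T, hT, rfl⟩; exact hT
  rw [this]
  exact MeasurableSet.iUnion fun T => MeasurableSet.iUnion fun _ =>
    measurableSet_gwGen_eq N r h T

lemma measurable_card_gwTree (r : ℕ) (h : ∀ u : List ℕ, u.length < r → Measurable[m] (N u)) :
    Measurable[m] (fun ω => (gwTree N ω r).card) := by
  have hsum : ∀ ω, (gwTree N ω r).card = ∑ k ∈ Finset.range (r+1), (gwGen N ω k).card := by
    intro ω
    rw [gwTree, Finset.card_biUnion]
    intro k hk l hl hkl
    rw [Function.onFun, Finset.disjoint_left]
    intro u hu hu'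
    have := length_of_mem_gwGen N ω k u hu
    have := length_of_mem_gwGen N ω l u hu'
    omega
  simp only [hsum]
  apply Finset.measurable_sum
  intro k hk
  rw [Finset.mem_range] at hk
  exact measurable_card_gwGen N k (fun u hu => h u (by omega))

end meas



variable {Ω : Type*} [MeasurableSpace Ω] {μ : Measure Ω}
  {N : List ℕ → Ω → ℕ}

/-- σ-algebra generated by the offspring variables indexed by `A`. -/
def famS (N : List ℕ → Ω → ℕ) (A : Set (List ℕ)) : MeasurableSpace Ω :=
  ⨆ u ∈ A, MeasurableSpace.comap (N u) inferInstance

lemma measurable_N_famS {A : Set (List ℕ)} {u : List ℕ} (hu : u ∈ A) :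
    Measurable[famS N A] (N u) := by
  have h1 : Measurable[MeasurableSpace.comap (N u) inferInstance] (N u) :=
    Measurable.of_comap_le le_rfl
  exact h1.mono (le_iSup₂ (f := fun u _ => MeasurableSpace.comap (N u) inferInstance) u hu) le_rfl

lemma famS_mono {A B : Set (List ℕ)} (hAB : A ⊆ B) : famS N A ≤ famS N B :=
  biSup_mono hAB

lemma famS_le (hmeas : ∀ u, Measurable (N u)) (A : Set (List ℕ)) :
    famS N A ≤ (inferInstance : MeasurableSpace Ω) :=
  iSup₂_le fun u _ => measurable_iff_comap_le.mp (hmeas u)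

lemma indep_famS (hmeas : ∀ u, Measurable (N u))
    (hindep : iIndepFun N μ)
    {A B : Set (List ℕ)} (hAB : Disjoint A B) :
    Indep (famS N A) (famS N B) μ :=
  indep_iSup_of_disjoint (fun u => measurable_iff_comap_le.mp (hmeas u))
    ((iIndepFun_iff_iIndep (fun _ => inferInstance) _ _).mp hindep) hAB

lemma factor_one (hmeas : ∀ u, Measurable (N u))
    (hindep : iIndepFun N μ)
    {A : Set (List ℕ)} {u : List ℕ} (hu : u ∉ A)
    {F : Ω → ℝ≥0∞} (hF : Measurable[famS N A] F) (g : ℕ → ℝ≥0∞) :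
    ∫⁻ ω, F ω * g (N u ω) ∂μ = (∫⁻ ω, F ω ∂μ) * ∫⁻ ω, g (N u ω) ∂μ := by
  refine lintegral_mul_eq_lintegral_mul_lintegral_of_independent_measurableSpace
    (famS_le hmeas A) (famS_le hmeas {u})
    (indep_famS hmeas hindep (Set.disjoint_singleton_right.mpr hu)) hF ?_
  exact (measurable_from_nat (f := g)).comp (measurable_N_famS (Set.mem_singleton u))

lemma factor_finset (hmeas : ∀ u, Measurable (N u))
    (hindep : iIndepFun N μ)
    (T : Finset (List ℕ)) :
    ∀ (A : Set (List ℕ)), Disjoint (↑T : Set (List ℕ)) A →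
    ∀ {F : Ω → ℝ≥0∞}, Measurable[famS N A] F → ∀ g : ℕ → ℝ≥0∞,
    ∫⁻ ω, F ω * ∏ u ∈ T, g (N u ω) ∂μ
      = (∫⁻ ω, F ω ∂μ) * ∏ u ∈ T, ∫⁻ ω, g (N u ω) ∂μ := by
  induction T using Finset.induction with
  | empty => intro A _ F hF g; simp
  | @insert u T hu ih =>
    intro A hTA F hF g
    have huA : u ∉ A ∪ ↑T := by
      intro h
      rcases h with h | h
      · exact (hTA.le_bot ⟨Finset.mem_coe.mpr (Finset.mem_insert_self u T), h⟩)
      · exact hu (Finset.mem_coe.mp h)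
    have hsub : (↑T : Set (List ℕ)) ⊆ ↑(insert u T) := by
      intro x hx; exact Finset.mem_coe.mpr (Finset.mem_insert_of_mem (Finset.mem_coe.mp hx))
    have hTA' : Disjoint (↑T : Set (List ℕ)) A := Set.disjoint_of_subset_left hsub hTA
    have hF' : Measurable[famS N (A ∪ ↑T)] fun ω => F ω * ∏ v ∈ T, g (N v ω) := by
      refine Measurable.mul (hF.mono (famS_mono Set.subset_union_left) le_rfl) ?_
      refine Finset.measurable_prod _ fun v hv => ?_
      exact (measurable_from_nat (f := g)).comp
        (measurable_N_famS (Set.mem_union_right _ (Finset.mem_coe.mpr hv)))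
    calc ∫⁻ ω, F ω * ∏ v ∈ insert u T, g (N v ω) ∂μ
        = ∫⁻ ω, (F ω * ∏ v ∈ T, g (N v ω)) * g (N u ω) ∂μ := by
          apply lintegral_congr; intro ω
          rw [Finset.prod_insert hu]; ring
      _ = (∫⁻ ω, F ω * ∏ v ∈ T, g (N v ω) ∂μ) * ∫⁻ ω, g (N u ω) ∂μ :=
          factor_one hmeas hindep huA hF' g
      _ = ((∫⁻ ω, F ω ∂μ) * ∏ v ∈ T, ∫⁻ ω, g (N v ω) ∂μ) * ∫⁻ ω, g (N u ω) ∂μ := by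
          rw [ih A hTA' hF g]
      _ = (∫⁻ ω, F ω ∂μ) * ∏ v ∈ insert u T, ∫⁻ ω, g (N v ω) ∂μ := by
          rw [Finset.prod_insert hu]; ring



section prob

variable {Ω : Type*} [MeasurableSpace Ω] (μ : Measure Ω) [IsProbabilityMeasure μ]
  (d : ℝ≥0) (N : List ℕ → Ω → ℕ)

lemma poisson_mgf (hmeas : ∀ u, Measurable (N u))
    (hlaw : ∀ u, μ.map (N u) = (poissonPMF d).toMeasure) (u : List ℕ) (c : ℝ) :
    ∫⁻ ω, ENNReal.ofReal (Real.exp (c * (N u ω : ℝ))) ∂μ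
      = ENNReal.ofReal (Real.exp ((d:ℝ) * (Real.exp c - 1))) := by
  have hmf : Measurable fun n : ℕ => ENNReal.ofReal (Real.exp (c * (n:ℝ))) :=
    measurable_from_nat
  rw [← lintegral_map hmf (hmeas u), hlaw u, lintegral_countable']
  have hsingle : ∀ n : ℕ, (poissonPMF d).toMeasure {n} = ENNReal.ofReal (poissonPMFReal d n) :=
    fun n => by
      rw [PMF.toMeasure_apply_singleton _ _ (measurableSet_singleton n)]; rfl
  simp only [hsingle]
  set y : ℝ := (d:ℝ) * Real.exp c with hy
  have hy0 : 0 ≤ y := by positivity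
  have hterm : ∀ n : ℕ,
      ENNReal.ofReal (Real.exp (c * (n:ℝ))) * ENNReal.ofReal (poissonPMFReal d n)
        = ENNReal.ofReal (Real.exp (-(d:ℝ)) * (y ^ n / n.factorial)) := by
    intro n
    rw [← ENNReal.ofReal_mul (Real.exp_nonneg _)]
    congr 1
    rw [ProbabilityTheory.poissonPMFReal]
    rw [mul_comm c (n:ℝ), Real.exp_nat_mul, hy, mul_pow]
    ring
  simp only [hterm]
  rw [← ENNReal.ofReal_tsum_of_nonneg (fun n => by positivity)
    ((Real.summable_pow_div_factorial y).mul_left _)]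
  congr 1
  rw [tsum_mul_left]
  have hexp : ∑' n : ℕ, y ^ n / (n.factorial : ℝ) = Real.exp y := by
    rw [Real.exp_eq_exp_ℝ]
    exact (NormedSpace.expSeries_div_hasSum_exp y).tsum_eq
  rw [hexp, ← Real.exp_add]
  congr 1
  ring

lemma lintegral_eq_tsum_gwGen (hmeas : ∀ u, Measurable (N u)) (r : ℕ)
    {f : Ω → ℝ≥0∞} (hf : Measurable f) :
    ∫⁻ ω, f ω ∂μ
      = ∑' T : Finset (List ℕ), ∫⁻ ω, ({ω' | gwGen N ω' r = T}.indicator f) ω ∂μ := by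
  rw [← lintegral_tsum (fun T =>
    (hf.indicator (measurableSet_gwGen_eq N r (fun u _ => hmeas u) T)).aemeasurable)]
  apply lintegral_congr
  intro ω
  have h1 : ∑' T : Finset (List ℕ), ({ω' : Ω | gwGen N ω' r = T}.indicator f) ω = f ω := by
    rw [tsum_eq_single (gwGen N ω r)]
    · exact Set.indicator_of_mem (show ω ∈ {ω' : Ω | gwGen N ω' r = gwGen N ω r} from rfl) f
    · intro T' hT'
      refine Set.indicator_of_notMem ?_ f
      intro h
      simp only [Set.mem_setOf_eq] at h
      exact hT' h.symm
  exact h1.symm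

lemma gw_step (hmeas : ∀ u, Measurable (N u))
    (hindep : iIndepFun N μ)
    (hlaw : ∀ u, μ.map (N u) = (poissonPMF d).toMeasure)
    (r : ℕ) (s a : ℝ) :
    ∫⁻ ω, ENNReal.ofReal (Real.exp (s * ((gwTree N ω (r+1)).card : ℝ)
        + a * ((gwGen N ω (r+1)).card : ℝ))) ∂μ
      = ∫⁻ ω, ENNReal.ofReal (Real.exp (s * ((gwTree N ω r).card : ℝ)
        + ((d:ℝ) * (Real.exp (s+a) - 1)) * ((gwGen N ω r).card : ℝ))) ∂μ := by
  have hcardT : ∀ k, Measurable fun ω => (gwTree N ω k).card :=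
    fun k => measurable_card_gwTree N k (fun u _ => hmeas u)
  have hcardG : ∀ k, Measurable fun ω => (gwGen N ω k).card :=
    fun k => measurable_card_gwGen N k (fun u _ => hmeas u)
  have hmeasI : ∀ (k : ℕ) (b e : ℝ), Measurable fun ω =>
      ENNReal.ofReal (Real.exp (b * ((gwTree N ω k).card : ℝ) + e * ((gwGen N ω k).card : ℝ))) := by
    intro k b e
    have hX : Measurable fun ω => ((gwTree N ω k).card : ℝ) :=
      measurable_from_nat.comp (hcardT k)
    have hY : Measurable fun ω => ((gwGen N ω k).card : ℝ) :=
      measurable_from_nat.comp (hcardG k)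
    exact ENNReal.measurable_ofReal.comp
      (Real.measurable_exp.comp ((hX.const_mul b).add (hY.const_mul e)))
  set c : ℝ := s + a with hc
  set K : ℝ≥0∞ := ENNReal.ofReal (Real.exp ((d:ℝ) * (Real.exp c - 1))) with hK
  rw [lintegral_eq_tsum_gwGen μ N hmeas r (hmeasI (r+1) s a),
      lintegral_eq_tsum_gwGen μ N hmeas r (hmeasI r s ((d:ℝ) * (Real.exp (s+a) - 1)))]
  refine tsum_congr fun T => ?_
  by_cases hT : ∀ u ∈ T, u.length = r
  swap
  · have hE : {ω' : Ω | gwGen N ω' r = T} = ∅ := by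
      ext ω'
      simp only [Set.mem_setOf_eq, Set.mem_empty_iff_false, iff_false]
      intro h
      subst h
      exact hT (length_of_mem_gwGen N ω' r)
    rw [hE]
    simp
  · set E : Set Ω := {ω' | gwGen N ω' r = T} with hEdef
    have hEmeas : MeasurableSet E := measurableSet_gwGen_eq N r (fun u _ => hmeas u) T
    -- pointwise splitting of the (r+1) integrand on E
    have key1 : ∀ ω, (E.indicator
          (fun ω' => ENNReal.ofReal (Real.exp (s * ((gwTree N ω' (r+1)).card : ℝ)
            + a * ((gwGen N ω' (r+1)).card : ℝ))))) ω
        = (E.indicator (fun ω' =>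
            ENNReal.ofReal (Real.exp (s * ((gwTree N ω' r).card : ℝ))))) ω
          * ∏ u ∈ T, ENNReal.ofReal (Real.exp (c * (N u ω : ℝ))) := by
      intro ω
      by_cases hω : ω ∈ E
      · rw [Set.indicator_of_mem hω, Set.indicator_of_mem hω]
        have hgen : gwGen N ω r = T := hω
        have hZ : ((gwTree N ω (r+1)).card : ℝ)
            = ((gwTree N ω r).card : ℝ) + ((gwGen N ω (r+1)).card : ℝ) := by
          rw [card_gwTree_succ]; push_cast; ring
        have hY : ((gwGen N ω (r+1)).card : ℝ) = ∑ u ∈ T, (N u ω : ℝ) := by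
          rw [card_gwGen_succ, hgen]; push_cast; ring
        rw [hZ, hY]
        have hexp : s * (((gwTree N ω r).card : ℝ) + ∑ u ∈ T, (N u ω : ℝ))
            + a * ∑ u ∈ T, (N u ω : ℝ)
            = s * ((gwTree N ω r).card : ℝ) + ∑ u ∈ T, c * (N u ω : ℝ) := by
          have hms : ∑ u ∈ T, c * (N u ω : ℝ) = c * ∑ u ∈ T, (N u ω : ℝ) :=
            (Finset.mul_sum _ _ _).symm
          rw [hms, hc]
          ring
        rw [hexp, Real.exp_add, Real.exp_sum,
          ENNReal.ofReal_mul (Real.exp_nonneg _),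
          ENNReal.ofReal_prod_of_nonneg (fun u _ => Real.exp_nonneg _)]
      · rw [Set.indicator_of_notMem hω, Set.indicator_of_notMem hω, zero_mul]
    rw [lintegral_congr key1]
    -- measurability of the history factor w.r.t. the σ-algebra of early generations
    have hNfam : ∀ u : List ℕ, u.length < r → Measurable[famS N {v | v.length < r}] (N u) :=
      fun u hu => measurable_N_famS hu
    have hFfam : Measurable[famS N {v | v.length < r}] fun ω' =>
        (E.indicator (fun ω'' =>
          ENNReal.ofReal (Real.exp (s * ((gwTree N ω'' r).card : ℝ))))) ω' := by
      refine Measurable.indicator ?_ (measurableSet_gwGen_eq N r hNfam T)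
      exact (measurable_from_nat
        (f := fun n : ℕ => ENNReal.ofReal (Real.exp (s * (n:ℝ))))).comp
        (measurable_card_gwTree N r hNfam)
    have hdisj : Disjoint (↑T : Set (List ℕ)) {v | v.length < r} := by
      rw [Set.disjoint_left]
      intro x hx hx'
      have := hT x (Finset.mem_coe.mp hx)
      simp only [Set.mem_setOf_eq] at hx'
      omega
    rw [factor_finset hmeas hindep T _ hdisj hFfam
      (fun n => ENNReal.ofReal (Real.exp (c * (n:ℝ))))]
    rw [Finset.prod_congr rfl (fun u _ => poisson_mgf μ d N hmeas hlaw u c),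
      Finset.prod_const]
    have hFmeas : Measurable fun ω' =>
        (E.indicator (fun ω'' =>
          ENNReal.ofReal (Real.exp (s * ((gwTree N ω'' r).card : ℝ))))) ω' :=
      Measurable.indicator ((measurable_from_nat
        (f := fun n : ℕ => ENNReal.ofReal (Real.exp (s * (n:ℝ))))).comp (hcardT r)) hEmeas
    rw [← hK, ← lintegral_mul_const (K ^ T.card) hFmeas]
    apply lintegral_congr
    intro ω
    by_cases hω : ω ∈ E
    · rw [Set.indicator_of_mem hω, Set.indicator_of_mem hω]
      have hgen : gwGen N ω r = T := hω
      have hcard : ((gwGen N ω r).card : ℝ) = (T.card : ℝ) := by rw [hgen]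
      rw [hK, ← ENNReal.ofReal_pow (Real.exp_nonneg _), ← Real.exp_nat_mul,
        ← ENNReal.ofReal_mul (Real.exp_nonneg _), ← Real.exp_add]
      congr 2
      rw [hcard, hc]
      ring
    · rw [Set.indicator_of_notMem hω, Set.indicator_of_notMem hω, zero_mul]

lemma gw_formula (hmeas : ∀ u, Measurable (N u))
    (hindep : iIndepFun N μ)
    (hlaw : ∀ u, μ.map (N u) = (poissonPMF d).toMeasure)
    (s : ℝ) : ∀ r : ℕ, ∀ a : ℝ,
    ∫⁻ ω, ENNReal.ofReal (Real.exp (s * ((gwTree N ω r).card : ℝ)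
        + a * ((gwGen N ω r).card : ℝ))) ∂μ
      = ENNReal.ofReal (Real.exp (gseq (d:ℝ) s r a)) := by
  intro r
  induction r with
  | zero =>
    intro a
    have : ∀ ω : Ω, ENNReal.ofReal (Real.exp (s * ((gwTree N ω 0).card : ℝ)
        + a * ((gwGen N ω 0).card : ℝ))) = ENNReal.ofReal (Real.exp (s + a)) := by
      intro ω
      rw [card_gwTree_zero, card_gwGen_zero]
      norm_num
    rw [lintegral_congr this, lintegral_const, measure_univ, mul_one]
    rfl
  | succ r ih =>
    intro a
    rw [gw_step μ d N hmeas hindep hlaw r s a, ih ((d:ℝ) * (Real.exp (s+a) - 1))]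
    rfl

end prob

end GWaux

/-- For a Galton–Watson branching process with Poisson(d) offspring,
`d > 1`, and `Z_r` the total population through generation `r`, for every `t > 0`
the quantities `E[exp(t·Z_r·d^{-r})]` are uniformly bounded in `r`. -/
theorem gw_exp_moment_bounded {Ω : Type*} [MeasurableSpace Ω] (μ : Measure Ω)
    [IsProbabilityMeasure μ] (d : ℝ≥0) (hd : 1 < (d : ℝ))
    (N : List ℕ → Ω → ℕ) (hmeas : ∀ u, Measurable (N u))
    (hindep : iIndepFun N μ)
    (hlaw : ∀ u, μ.map (N u) = (poissonPMF d).toMeasure)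
    (t : ℝ) (ht : 0 < t) :
    ∃ B : ℝ≥0∞, B ≠ ⊤ ∧ ∀ r : ℕ,
      ∫⁻ ω, ENNReal.ofReal (Real.exp (t * (gwTree N ω r).card / (d : ℝ) ^ r)) ∂μ ≤ B := by
  obtain ⟨B, hB⟩ := GWaux.bfun_bound hd t ht
  refine ⟨ENNReal.ofReal (Real.exp B), ENNReal.ofReal_ne_top, fun r => ?_⟩
  have hD0 : (0:ℝ) < (d:ℝ) := by linarith
  have hpt : ∀ ω : Ω, ENNReal.ofReal (Real.exp (t * (gwTree N ω r).card / (d : ℝ) ^ r))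
      = ENNReal.ofReal (Real.exp ((t / (d:ℝ)^r) * ((gwTree N ω r).card : ℝ)
          + 0 * ((gwGen N ω r).card : ℝ))) := by
    intro ω
    congr 2
    ring
  rw [lintegral_congr hpt,
    GWaux.gw_formula μ d N hmeas hindep hlaw (t / (d:ℝ)^r) r 0]
  exact ENNReal.ofReal_le_ofReal (Real.exp_le_exp.2 (hB r))
end

section
/- Consider the ferromagnetic Ising model on a finite tree T with interactions 0 ≤ β_{uv} ≤ β and arbitrary external fields (possibly ±∞, i.e., some spins frozen). Let U ⊆ Λ ⊂ V and let η^+, η^− be configurations on Λ differing only on U, with η^+ ≡ + and η^− ≡ − on U. Then for any vertex v, 0 ≤ P(σ_v = + | σ_Λ = η^+) − P(σ_v = + | σ_Λ = η^−) ≤ Σ_{u ∈ U} (tanh β)^{d(u,v)}, where d(u,v) is the graph distance in T. -/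
open scoped Classical BigOperators

/-- The ±1 spin value of a Boolean configuration at a vertex. -/
def spin {V : Type*} (σ : V → Bool) (v : V) : ℝ := if σ v then 1 else -1

/-- The Hamiltonian of the Ising model on a graph `G` with pair interactions `β`
(assumed symmetric) and external fields `h`; each edge is counted once. -/
noncomputable def ham {V : Type*} [Fintype V] (G : SimpleGraph V)
    (β : V → V → ℝ) (h : V → ℝ) (σ : V → Bool) : ℝ :=
  (∑ u : V, ∑ v : V, if G.Adj u v then β u v * spin σ u * spin σ v else 0) / 2
    + ∑ v : V, h v * spin σ v

/-- The Gibbs conditional probability that the spin at `v` is `+`, given that the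
configuration agrees with `η` on `Λ`. -/
noncomputable def condProbPlus {V : Type*} [Fintype V] [DecidableEq V]
    (G : SimpleGraph V) (β : V → V → ℝ) (h : V → ℝ)
    (v : V) (Λ : Finset V) (η : V → Bool) : ℝ :=
  (∑ σ : V → Bool, if σ v = true ∧ ∀ u ∈ Λ, σ u = η u then Real.exp (ham G β h σ) else 0) /
  (∑ σ : V → Bool, if ∀ u ∈ Λ, σ u = η u then Real.exp (ham G β h σ) else 0)

namespace IsingAux

open Finset

variable {V : Type*} [Fintype V] [DecidableEq V]

/-- glue two configurations along a predicate -/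
noncomputable def sw (p : V → Prop) (σ τ : V → Bool) : V → Bool :=
  fun x => if p x then σ x else τ x

lemma sw_of_pos {p : V → Prop} {x : V} (hx : p x) (σ τ : V → Bool) : sw p σ τ x = σ x := by
  simp [sw, hx]

lemma sw_of_neg {p : V → Prop} {x : V} (hx : ¬ p x) (σ τ : V → Bool) : sw p σ τ x = τ x := by
  simp [sw, hx]

lemma sw_inv {p : V → Prop} (σ τ : V → Bool) (x : V) :
    sw p (sw p σ τ) (sw p τ σ) x = σ x := by
  by_cases hx : p x <;> simp [sw, hx]

lemma ham_swap (G : SimpleGraph V) (β : V → V → ℝ) (h : V → ℝ)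
    (hsym : ∀ u v, β u v = β v u) (p : V → Prop) (u w : V)
    (hadj : G.Adj u w) (hpu : p u) (hpw : ¬ p w)
    (hcross : ∀ x y, G.Adj x y → ((p x ↔ p y) ∨ (x = u ∧ y = w) ∨ (x = w ∧ y = u)))
    (σ τ : V → Bool) :
    ham G β h (sw p σ τ) + ham G β h (sw p τ σ)
      = ham G β h σ + ham G β h τ
        + β u w * (spin σ u * spin τ w + spin τ u * spin σ w
            - spin σ u * spin σ w - spin τ u * spin τ w) := by
  have huw : u ≠ w := fun e => hpw (e ▸ hpu)
  set K : ℝ := spin σ u * spin τ w + spin τ u * spin σ w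
      - spin σ u * spin σ w - spin τ u * spin τ w with hK
  have key : ∀ x y : V,
      (if G.Adj x y then β x y * spin (sw p σ τ) x * spin (sw p σ τ) y else 0)
        + (if G.Adj x y then β x y * spin (sw p τ σ) x * spin (sw p τ σ) y else 0)
      = ((if G.Adj x y then β x y * spin σ x * spin σ y else 0)
        + (if G.Adj x y then β x y * spin τ x * spin τ y else 0))
        + (if (x = u ∧ y = w) ∨ (x = w ∧ y = u) then β u w else 0) * K := by
    intro x y
    by_cases hadj' : G.Adj x y
    · rcases hcross x y hadj' with hiff | ⟨rfl, rfl⟩ | ⟨rfl, rfl⟩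
      · have hcond : ¬((x = u ∧ y = w) ∨ (x = w ∧ y = u)) := by
          rintro (⟨rfl, rfl⟩ | ⟨rfl, rfl⟩)
          · exact hpw (hiff.mp hpu)
          · exact hpw (hiff.mpr hpu)
        by_cases hpx : p x
        · have hpy : p y := hiff.mp hpx
          simp only [if_pos hadj', if_neg hcond, spin, sw, if_pos hpx, if_pos hpy]
          ring
        · have hpy : ¬ p y := fun hy => hpx (hiff.mpr hy)
          simp only [if_pos hadj', if_neg hcond, spin, sw, if_neg hpx, if_neg hpy]
          ring
      · simp only [spin, sw, hK]
        simp [hadj', hpu, hpw]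
        cases hσx : σ x <;> cases hσy : σ y <;> cases hτx : τ x <;> cases hτy : τ y <;>
          simp [hσx, hσy, hτx, hτy] <;> ring
      · simp only [spin, sw, hK, hsym y x]
        simp [hadj', hpu, hpw]
        cases hσx : σ x <;> cases hσy : σ y <;> cases hτx : τ x <;> cases hτy : τ y <;>
          simp [hσx, hσy, hτx, hτy] <;> ring
    · have hcnd : ¬((x = u ∧ y = w) ∨ (x = w ∧ y = u)) := by
        rintro (⟨rfl, rfl⟩ | ⟨rfl, rfl⟩)
        · exact hadj' hadj
        · exact hadj' hadj.symm
      simp [hadj', hcnd]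
  have hdsum : (∑ x : V, ∑ y : V,
        (if (x = u ∧ y = w) ∨ (x = w ∧ y = u) then β u w else 0)) = 2 * β u w := by
    have hsplit : ∀ x y : V, (if (x = u ∧ y = w) ∨ (x = w ∧ y = u) then β u w else 0)
        = (if x = u ∧ y = w then β u w else 0) + (if x = w ∧ y = u then β u w else 0) := by
      intro x y
      by_cases h1 : x = u ∧ y = w
      · obtain ⟨rfl, rfl⟩ := h1
        have h2 : ¬(x = y ∧ y = x) := fun hc => huw hc.1
        simp [h2]
      · by_cases h2 : x = w ∧ y = u
        · obtain ⟨rfl, rfl⟩ := h2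
          simp [h1]
        · simp [h1, h2]
    simp only [hsplit, Finset.sum_add_distrib]
    have e1 : ∀ x : V, (∑ y : V, if x = u ∧ y = w then β u w else 0)
        = if x = u then β u w else 0 := by
      intro x; by_cases hx : x = u <;> simp [hx]
    have e2 : ∀ x : V, (∑ y : V, if x = w ∧ y = u then β u w else 0)
        = if x = w then β u w else 0 := by
      intro x; by_cases hx : x = w <;> simp [hx]
    simp only [e1, e2]
    simp
    ring
  have hE : (∑ x : V, ∑ y : V, if G.Adj x y then β x y * spin (sw p σ τ) x * spin (sw p σ τ) y else 0)
      + (∑ x : V, ∑ y : V, if G.Adj x y then β x y * spin (sw p τ σ) x * spin (sw p τ σ) y else 0)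
      = ((∑ x : V, ∑ y : V, if G.Adj x y then β x y * spin σ x * spin σ y else 0)
        + (∑ x : V, ∑ y : V, if G.Adj x y then β x y * spin τ x * spin τ y else 0))
        + 2 * β u w * K := by
    have h1 : (∑ x : V, ∑ y : V,
        ((if G.Adj x y then β x y * spin (sw p σ τ) x * spin (sw p σ τ) y else 0)
          + (if G.Adj x y then β x y * spin (sw p τ σ) x * spin (sw p τ σ) y else 0)))
        = ∑ x : V, ∑ y : V,
          (((if G.Adj x y then β x y * spin σ x * spin σ y else 0)
          + (if G.Adj x y then β x y * spin τ x * spin τ y else 0))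
          + (if (x = u ∧ y = w) ∨ (x = w ∧ y = u) then β u w else 0) * K) :=
      Finset.sum_congr rfl fun x _ => Finset.sum_congr rfl fun y _ => key x y
    simp only [Finset.sum_add_distrib, ← Finset.sum_mul] at h1
    rw [hdsum] at h1
    linarith [h1]
  have hfield : (∑ x : V, h x * spin (sw p σ τ) x) + (∑ x : V, h x * spin (sw p τ σ) x)
      = (∑ x : V, h x * spin σ x) + (∑ x : V, h x * spin τ x) := by
    rw [← Finset.sum_add_distrib, ← Finset.sum_add_distrib]
    refine Finset.sum_congr rfl fun x _ => ?_
    by_cases hpx : p x <;> simp [spin, sw, hpx] <;> ring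
  unfold ham
  linear_combination hE / 2 + hfield

/-- constrained Gibbs sum -/
noncomputable def S (G : SimpleGraph V) (β : V → V → ℝ) (h : V → ℝ)
    (Λ : Finset V) (η : V → Bool) (F : (V → Bool) → ℝ) : ℝ :=
  ∑ σ : V → Bool, if ∀ x ∈ Λ, σ x = η x then F σ * Real.exp (ham G β h σ) else 0

/-- the swap involution on pairs of configurations -/
noncomputable def swapPair (p : V → Prop) : ((V → Bool) × (V → Bool)) ≃ ((V → Bool) × (V → Bool)) where
  toFun q := (sw p q.1 q.2, sw p q.2 q.1)
  invFun q := (sw p q.1 q.2, sw p q.2 q.1)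
  left_inv q := by
    ext x
    · exact sw_inv q.1 q.2 x
    · exact sw_inv q.2 q.1 x
  right_inv q := by
    ext x
    · exact sw_inv q.1 q.2 x
    · exact sw_inv q.2 q.1 x

lemma spin_eq {σ τ : V → Bool} {x y : V} (h : σ x = τ y) : spin σ x = spin τ y := by
  unfold spin; rw [h]

lemma swap_identity (G : SimpleGraph V) (β : V → V → ℝ) (h : V → ℝ)
    (hsym : ∀ u v, β u v = β v u) (p : V → Prop) (u w : V)
    (hadj : G.Adj u w) (hpu : p u) (hpw : ¬ p w)
    (hcross : ∀ x y, G.Adj x y → ((p x ↔ p y) ∨ (x = u ∧ y = w) ∨ (x = w ∧ y = u)))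
    (Λ : Finset V) (hu : u ∈ Λ) (hw : w ∈ Λ)
    (η₁ η₂ : V → Bool) (hη : ∀ x ∈ Λ, x ≠ u → x ≠ w → η₁ x = η₂ x)
    (F₁ F₂ : (V → Bool) → ℝ)
    (hF₁ : ∀ σ τ : V → Bool, (∀ x, ¬ p x → σ x = τ x) → F₁ σ = F₁ τ)
    (hF₂ : ∀ σ τ : V → Bool, (∀ x, ¬ p x → σ x = τ x) → F₂ σ = F₂ τ) :
    S G β h Λ η₁ F₁ * S G β h Λ η₂ F₂
      = Real.exp (β u w * ((spin η₁ u - spin η₂ u) * (spin η₁ w - spin η₂ w)))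
        * (S G β h Λ (Function.update η₁ w (η₂ w)) F₂
            * S G β h Λ (Function.update η₂ w (η₁ w)) F₁) := by
  have trans0 : ∀ (ζ₁ ζ₂ : V → Bool), (∀ x ∈ Λ, x ≠ u → x ≠ w → ζ₁ x = ζ₂ x) →
      ∀ σ τ : V → Bool, (∀ x ∈ Λ, σ x = ζ₁ x) → (∀ x ∈ Λ, τ x = ζ₂ x) →
      (∀ x ∈ Λ, sw p σ τ x = Function.update ζ₁ w (ζ₂ w) x) := by
    intro ζ₁ ζ₂ hζ σ τ hσ hτ x hx
    by_cases hpx : p x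
    · have hxw : x ≠ w := fun e => hpw (e ▸ hpx)
      rw [Function.update_of_ne hxw, sw_of_pos hpx]
      exact hσ x hx
    · rw [sw_of_neg hpx]
      by_cases hxw : x = w
      · subst hxw
        rw [Function.update_self]
        exact hτ x hx
      · rw [Function.update_of_ne hxw]
        have hxu : x ≠ u := fun e => hpx (e ▸ hpu)
        rw [hτ x hx, ← hζ x hx hxu hxw]
  set η₁' := Function.update η₁ w (η₂ w) with hη₁'
  set η₂' := Function.update η₂ w (η₁ w) with hη₂'
  have hη' : ∀ x ∈ Λ, x ≠ u → x ≠ w → η₁' x = η₂' x := by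
    intro x hx hxu hxw
    rw [hη₁', hη₂', Function.update_of_ne hxw, Function.update_of_ne hxw]
    exact hη x hx hxu hxw
  have hback1 : η₁' = Function.update η₁ w (η₂ w) := hη₁'
  have hup1 : Function.update η₁' w (η₂' w) = η₁ := by
    rw [hη₂', Function.update_self, hη₁', Function.update_idem, Function.update_eq_self]
  have hup2 : Function.update η₂' w (η₁' w) = η₂ := by
    rw [hη₁', Function.update_self, hη₂', Function.update_idem, Function.update_eq_self]
  -- pointwise identity
  have hpoint : ∀ q : (V → Bool) × (V → Bool),
      (if ∀ x ∈ Λ, q.1 x = η₁ x then F₁ q.1 * Real.exp (ham G β h q.1) else 0)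
        * (if ∀ x ∈ Λ, q.2 x = η₂ x then F₂ q.2 * Real.exp (ham G β h q.2) else 0)
      = Real.exp (β u w * ((spin η₁ u - spin η₂ u) * (spin η₁ w - spin η₂ w)))
        * ((if ∀ x ∈ Λ, sw p q.1 q.2 x = η₁' x then
              F₂ (sw p q.1 q.2) * Real.exp (ham G β h (sw p q.1 q.2)) else 0)
          * (if ∀ x ∈ Λ, sw p q.2 q.1 x = η₂' x then
              F₁ (sw p q.2 q.1) * Real.exp (ham G β h (sw p q.2 q.1)) else 0)) := by
    rintro ⟨σ, τ⟩
    dsimp only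
    by_cases hc1 : ∀ x ∈ Λ, σ x = η₁ x
    · by_cases hc2 : ∀ x ∈ Λ, τ x = η₂ x
      · have hc1' : ∀ x ∈ Λ, sw p σ τ x = η₁' x := trans0 η₁ η₂ hη σ τ hc1 hc2
        have hc2' : ∀ x ∈ Λ, sw p τ σ x = η₂' x :=
          trans0 η₂ η₁ (fun x hx hxu hxw => (hη x hx hxu hxw).symm) τ σ hc2 hc1
        rw [if_pos hc1, if_pos hc2, if_pos hc1', if_pos hc2']
        have hf1 : F₁ (sw p τ σ) = F₁ σ :=
          hF₁ _ _ (fun x hx => sw_of_neg hx τ σ)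
        have hf2 : F₂ (sw p σ τ) = F₂ τ :=
          hF₂ _ _ (fun x hx => sw_of_neg hx σ τ)
        rw [hf1, hf2]
        have hham := ham_swap G β h hsym p u w hadj hpu hpw hcross σ τ
        have ha1 : spin σ u = spin η₁ u := spin_eq (hc1 u hu)
        have hb1 : spin σ w = spin η₁ w := spin_eq (hc1 w hw)
        have ha2 : spin τ u = spin η₂ u := spin_eq (hc2 u hu)
        have hb2 : spin τ w = spin η₂ w := spin_eq (hc2 w hw)
        rw [ha1, hb1, ha2, hb2] at hham
        have harg : β u w * ((spin η₁ u - spin η₂ u) * (spin η₁ w - spin η₂ w))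
            + (ham G β h (sw p σ τ) + ham G β h (sw p τ σ))
            = ham G β h σ + ham G β h τ := by
          rw [hham]; ring
        calc F₁ σ * Real.exp (ham G β h σ) * (F₂ τ * Real.exp (ham G β h τ))
            = F₁ σ * F₂ τ * Real.exp (ham G β h σ + ham G β h τ) := by
              rw [Real.exp_add]; ring
          _ = Real.exp (β u w * ((spin η₁ u - spin η₂ u) * (spin η₁ w - spin η₂ w)))
              * (F₂ τ * Real.exp (ham G β h (sw p σ τ))
                  * (F₁ σ * Real.exp (ham G β h (sw p τ σ)))) := by
              rw [← harg, Real.exp_add, Real.exp_add]; ring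
      · rw [if_neg hc2, mul_zero]
        by_cases hc1' : ∀ x ∈ Λ, sw p σ τ x = η₁' x
        · by_cases hc2' : ∀ x ∈ Λ, sw p τ σ x = η₂' x
          · exfalso
            have := trans0 η₂' η₁' (fun x hx hxu hxw => (hη' x hx hxu hxw).symm)
              (sw p τ σ) (sw p σ τ) hc2' hc1'
            rw [hup2] at this
            exact hc2 (fun x hx => by rw [← sw_inv (p := p) τ σ x]; exact this x hx)
          · rw [if_neg hc2', mul_zero, mul_zero]
        · rw [if_neg hc1', zero_mul, mul_zero]
    · rw [if_neg hc1, zero_mul]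
      by_cases hc1' : ∀ x ∈ Λ, sw p σ τ x = η₁' x
      · by_cases hc2' : ∀ x ∈ Λ, sw p τ σ x = η₂' x
        · exfalso
          have := trans0 η₁' η₂' hη' (sw p σ τ) (sw p τ σ) hc1' hc2'
          rw [hup1] at this
          exact hc1 (fun x hx => by rw [← sw_inv (p := p) σ τ x]; exact this x hx)
        · rw [if_neg hc2', mul_zero, mul_zero]
      · rw [if_neg hc1', zero_mul, mul_zero]
  -- now sum
  simp only [S]
  rw [Fintype.sum_mul_sum]
  have lhs_eq : (∑ σ : V → Bool, ∑ τ : V → Bool,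
      (if ∀ x ∈ Λ, σ x = η₁ x then F₁ σ * Real.exp (ham G β h σ) else 0)
        * (if ∀ x ∈ Λ, τ x = η₂ x then F₂ τ * Real.exp (ham G β h τ) else 0))
      = ∑ σ : V → Bool, ∑ τ : V → Bool,
        Real.exp (β u w * ((spin η₁ u - spin η₂ u) * (spin η₁ w - spin η₂ w)))
          * ((if ∀ x ∈ Λ, sw p σ τ x = η₁' x then
              F₂ (sw p σ τ) * Real.exp (ham G β h (sw p σ τ)) else 0)
            * (if ∀ x ∈ Λ, sw p τ σ x = η₂' x then
              F₁ (sw p τ σ) * Real.exp (ham G β h (sw p τ σ)) else 0)) :=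
    Finset.sum_congr rfl fun σ _ => Finset.sum_congr rfl fun τ _ => hpoint (σ, τ)
  rw [lhs_eq]
  have swsum : (∑ σ : V → Bool, ∑ τ : V → Bool,
      Real.exp (β u w * ((spin η₁ u - spin η₂ u) * (spin η₁ w - spin η₂ w)))
        * ((if ∀ x ∈ Λ, sw p σ τ x = η₁' x then
            F₂ (sw p σ τ) * Real.exp (ham G β h (sw p σ τ)) else 0)
          * (if ∀ x ∈ Λ, sw p τ σ x = η₂' x then
            F₁ (sw p τ σ) * Real.exp (ham G β h (sw p τ σ)) else 0)))
      = ∑ σ : V → Bool, ∑ τ : V → Bool,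
        Real.exp (β u w * ((spin η₁ u - spin η₂ u) * (spin η₁ w - spin η₂ w)))
          * ((if ∀ x ∈ Λ, σ x = η₁' x then F₂ σ * Real.exp (ham G β h σ) else 0)
            * (if ∀ x ∈ Λ, τ x = η₂' x then F₁ τ * Real.exp (ham G β h τ) else 0)) := by
    rw [← Fintype.sum_prod_type (f := fun q : (V → Bool) × (V → Bool) =>
      Real.exp (β u w * ((spin η₁ u - spin η₂ u) * (spin η₁ w - spin η₂ w)))
        * ((if ∀ x ∈ Λ, sw p q.1 q.2 x = η₁' x then
            F₂ (sw p q.1 q.2) * Real.exp (ham G β h (sw p q.1 q.2)) else 0)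
          * (if ∀ x ∈ Λ, sw p q.2 q.1 x = η₂' x then
            F₁ (sw p q.2 q.1) * Real.exp (ham G β h (sw p q.2 q.1)) else 0))),
      ← Fintype.sum_prod_type (f := fun q : (V → Bool) × (V → Bool) =>
      Real.exp (β u w * ((spin η₁ u - spin η₂ u) * (spin η₁ w - spin η₂ w)))
        * ((if ∀ x ∈ Λ, q.1 x = η₁' x then F₂ q.1 * Real.exp (ham G β h q.1) else 0)
          * (if ∀ x ∈ Λ, q.2 x = η₂' x then F₁ q.2 * Real.exp (ham G β h q.2) else 0)))]
    exact Fintype.sum_equiv (swapPair p) _ _ (fun q => rfl)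
  rw [swsum]
  simp only [← mul_assoc]
  rw [← Fintype.sum_mul_sum, ← Finset.mul_sum]

variable {G : SimpleGraph V} {β : V → V → ℝ} {h : V → ℝ}

lemma S_one_pos (Λ : Finset V) (η : V → Bool) :
    0 < S G β h Λ η (fun _ => 1) := by
  rw [S]
  apply Finset.sum_pos'
  · intro σ _
    split <;> positivity
  · refine ⟨η, Finset.mem_univ _, ?_⟩
    rw [if_pos (fun x _ => rfl)]
    positivity

lemma S_nonneg (Λ : Finset V) (η : V → Bool) {F : (V → Bool) → ℝ}
    (hF : ∀ σ, 0 ≤ F σ) : 0 ≤ S G β h Λ η F := by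
  rw [S]
  apply Finset.sum_nonneg
  intro σ _
  split
  · exact mul_nonneg (hF σ) (Real.exp_pos _).le
  · exact le_refl 0

lemma S_le_one (Λ : Finset V) (η : V → Bool) {F : (V → Bool) → ℝ}
    (hF : ∀ σ, F σ ≤ 1) : S G β h Λ η F ≤ S G β h Λ η (fun _ => 1) := by
  rw [S, S]
  apply Finset.sum_le_sum
  intro σ _
  split
  · exact mul_le_mul_of_nonneg_right (hF σ) (Real.exp_pos _).le
  · exact le_refl 0

/-- indicator of `σ v = true` -/
noncomputable def Fv (v : V) : (V → Bool) → ℝ := fun σ => if σ v then 1 else 0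

lemma Fv_nonneg (v : V) (σ : V → Bool) : 0 ≤ Fv v σ := by
  rw [Fv]; split <;> norm_num

lemma Fv_le_one (v : V) (σ : V → Bool) : Fv v σ ≤ 1 := by
  rw [Fv]; split <;> norm_num

lemma condProbPlus_eq_S (v : V) (Λ : Finset V) (η : V → Bool) :
    condProbPlus G β h v Λ η = S G β h Λ η (Fv v) / S G β h Λ η (fun _ => 1) := by
  rw [condProbPlus, S, S]
  congr 1
  · refine Finset.sum_congr rfl fun σ _ => ?_
    by_cases h1 : σ v = true <;> by_cases h2 : ∀ x ∈ Λ, σ x = η x <;>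
      simp [Fv, h1, h2]
  · refine Finset.sum_congr rfl fun σ _ => ?_
    simp

lemma S_split {w : V} (Λ' : Finset V) (hw : w ∉ Λ') (η : V → Bool) (F : (V → Bool) → ℝ) :
    S G β h Λ' η F
      = S G β h (insert w Λ') (Function.update η w true) F
        + S G β h (insert w Λ') (Function.update η w false) F := by
  rw [S, S, S, ← Finset.sum_add_distrib]
  refine Finset.sum_congr rfl fun σ _ => ?_
  have hiff : ∀ t : Bool, (∀ x ∈ insert w Λ', σ x = Function.update η w t x)
      ↔ (σ w = t ∧ ∀ x ∈ Λ', σ x = η x) := by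
    intro t
    constructor
    · intro hσ
      refine ⟨by simpa using hσ w (Finset.mem_insert_self _ _), fun x hx => ?_⟩
      have hxw : x ≠ w := fun e => hw (by rwa [e] at hx)
      have := hσ x (Finset.mem_insert_of_mem hx)
      rwa [Function.update_of_ne hxw] at this
    · rintro ⟨h1, h2⟩ x hx
      rcases Finset.mem_insert.mp hx with rfl | hx
      · simpa using h1
      · rw [Function.update_of_ne (fun e => hw (by rwa [e] at hx))]
        exact h2 x hx
  by_cases hC : ∀ x ∈ Λ', σ x = η x
  · cases hσw : σ w
    · rw [if_pos hC, if_neg, if_pos ((hiff false).mpr ⟨hσw, hC⟩), zero_add]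
      intro hcon
      exact absurd (((hiff true).mp hcon).1.symm.trans hσw) (by simp)
    · rw [if_pos hC, if_pos ((hiff true).mpr ⟨hσw, hC⟩), if_neg, add_zero]
      intro hcon
      exact absurd (((hiff false).mp hcon).1.symm.trans hσw) (by simp)
  · rw [if_neg hC, if_neg, if_neg, add_zero]
    · exact fun hcon => hC ((hiff false).mp hcon).2
    · exact fun hcon => hC ((hiff true).mp hcon).2

lemma condProbPlus_of_mem {v : V} {Λ : Finset V} (hv : v ∈ Λ) (η : V → Bool) :
    condProbPlus G β h v Λ η = if η v then 1 else 0 := by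
  rw [condProbPlus]
  cases hηv : η v
  · rw [if_neg (by simp)]
    have hnum : (∑ σ : V → Bool,
        if σ v = true ∧ ∀ x ∈ Λ, σ x = η x then Real.exp (ham G β h σ) else 0) = 0 := by
      apply Finset.sum_eq_zero
      intro σ _
      rw [if_neg]
      rintro ⟨h1, h2⟩
      rw [h2 v hv, hηv] at h1
      exact absurd h1 (by simp)
    rw [hnum, zero_div]
  · rw [if_pos rfl]
    have hnum : (∑ σ : V → Bool,
        if σ v = true ∧ ∀ x ∈ Λ, σ x = η x then Real.exp (ham G β h σ) else 0)
        = ∑ σ : V → Bool, if ∀ x ∈ Λ, σ x = η x then Real.exp (ham G β h σ) else 0 := by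
      refine Finset.sum_congr rfl fun σ _ => ?_
      by_cases h2 : ∀ x ∈ Λ, σ x = η x
      · rw [if_pos ⟨by rw [h2 v hv, hηv], h2⟩, if_pos h2]
      · rw [if_neg (fun hc => h2 hc.2), if_neg h2]
    rw [hnum, div_self]
    have := S_one_pos (G := G) (β := β) (h := h) Λ η
    rw [S] at this
    simp only [one_mul] at this
    exact ne_of_gt this

lemma denom_eq_S (Λ : Finset V) (η : V → Bool) :
    (∑ σ : V → Bool, if ∀ x ∈ Λ, σ x = η x then Real.exp (ham G β h σ) else 0)
      = S G β h Λ η (fun _ => 1) := by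
  rw [S]
  refine Finset.sum_congr rfl fun σ _ => ?_
  simp

lemma condProbPlus_congr {v : V} {Λ : Finset V} {η η' : V → Bool}
    (hηη' : ∀ x ∈ Λ, η x = η' x) :
    condProbPlus G β h v Λ η = condProbPlus G β h v Λ η' := by
  rw [condProbPlus, condProbPlus]
  have hiff : ∀ σ : V → Bool, (∀ x ∈ Λ, σ x = η x) ↔ (∀ x ∈ Λ, σ x = η' x) :=
    fun σ => ⟨fun hs x hx => (hs x hx).trans (hηη' x hx),
      fun hs x hx => (hs x hx).trans (hηη' x hx).symm⟩
  congr 1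
  · exact Finset.sum_congr rfl fun σ _ => by rw [if_congr (and_congr_right fun _ => hiff σ) rfl rfl]
  · exact Finset.sum_congr rfl fun σ _ => by rw [if_congr (hiff σ) rfl rfl]

lemma exists_next {G : SimpleGraph V} (hT : G.IsTree) (u v : V) (hne : v ≠ u) :
    ∃ w : V, G.Adj u w ∧ G.dist w v + 1 = G.dist u v ∧
      ∃ p : V → Prop, p u ∧ ¬ p w ∧ ¬ p v ∧
        (∀ x y, G.Adj x y → ((p x ↔ p y) ∨ (x = u ∧ y = w) ∨ (x = w ∧ y = u))) := by
  have hconn := hT.isConnected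
  have hd0 : G.dist u v ≠ 0 := by
    intro e
    exact hne ((hconn.dist_eq_zero_iff).mp e).symm
  obtain ⟨q, hq⟩ := SimpleGraph.exists_walk_of_dist_ne_zero hd0
  cases q with
  | nil => simp at hd0
  | cons hadj r =>
    rename_i w
    rw [SimpleGraph.Walk.length_cons] at hq
    have hdle : G.dist w v ≤ r.length := SimpleGraph.dist_le r
    have htri : G.dist u v ≤ G.dist w v + 1 := by
      have h1 : G.dist u v ≤ G.dist u w + G.dist w v := hconn.dist_triangle
      have h2 : G.dist u w = 1 := SimpleGraph.dist_eq_one_iff_adj.mpr hadj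
      omega
    have hdw : G.dist w v + 1 = G.dist u v := by omega
    have hmem : s(u, w) ∉ r.edges := by
      intro hmem
      have husup : u ∈ r.support := r.fst_mem_support_of_mem_edges hmem
      have := SimpleGraph.dist_le (r.dropUntil u husup)
      have := SimpleGraph.Walk.length_dropUntil_le r husup
      omega
    have hwv : (G.deleteEdges {s(u, w)}).Reachable w v :=
      ⟨r.toDeleteEdges {s(u, w)} (fun e he hc => hmem (by rwa [Set.mem_singleton_iff.mp hc] at he))⟩
    have hbridge : ¬ (G.deleteEdges {s(u, w)}).Reachable u w := by
      have hb : G.IsBridge s(u, w) :=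
        SimpleGraph.isAcyclic_iff_forall_adj_isBridge.mp hT.IsAcyclic hadj
      have := SimpleGraph.isBridge_iff.mp hb
      intro hr
      apply this
      have : G.deleteEdges {s(u, w)} = G \ SimpleGraph.fromEdgeSet {s(u, w)} := rfl
      rwa [this] at hr
    refine ⟨w, hadj, hdw, fun x => (G.deleteEdges {s(u, w)}).Reachable x u,
      SimpleGraph.Reachable.refl u, ?_, ?_, ?_⟩
    · exact fun hr => hbridge hr.symm
    · exact fun hr => hbridge ((hwv.trans hr).symm)
    · intro x y hxy
      by_cases he : s(x, y) = s(u, w)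
      · right
        rcases Sym2.eq_iff.mp he with ⟨rfl, rfl⟩ | ⟨rfl, rfl⟩
        · exact Or.inl ⟨rfl, rfl⟩
        · exact Or.inr ⟨rfl, rfl⟩
      · left
        have hadj' : (G.deleteEdges {s(u, w)}).Adj x y :=
          SimpleGraph.deleteEdges_adj.mpr ⟨hxy, by simpa using he⟩
        exact ⟨fun hx => hadj'.symm.reachable.trans hx, fun hy => hadj'.reachable.trans hy⟩

lemma tanh_eq' (x : ℝ) :
    Real.tanh x = (Real.exp (2 * x) - 1) / (Real.exp (2 * x) + 1) := by
  rw [Real.tanh_eq_sinh_div_cosh, Real.sinh_eq, Real.cosh_eq]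
  have h1 : Real.exp x ≠ 0 := (Real.exp_pos x).ne'
  have h2 : Real.exp (2 * x) = Real.exp x * Real.exp x := by
    rw [← Real.exp_add]; ring_nf
  have h3 : Real.exp (-x) = 1 / Real.exp x := by
    rw [Real.exp_neg]; rw [inv_eq_one_div]
  have h4 : (0:ℝ) < Real.exp (2*x) + 1 := by positivity
  rw [h2, h3]
  rw [div_eq_div_iff (by positivity) (by positivity)]
  field_simp

lemma tanh_nonneg' {x : ℝ} (hx : 0 ≤ x) : 0 ≤ Real.tanh x := by
  rw [tanh_eq']
  have h1 : (1:ℝ) ≤ Real.exp (2 * x) := Real.one_le_exp (by linarith)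
  have h2 : (0:ℝ) < Real.exp (2 * x) + 1 := by positivity
  apply div_nonneg <;> linarith

lemma core_ineq (E T Zpp Zpm Zmp Zmm : ℝ)
    (hZpp : 0 < Zpp) (hZpm : 0 < Zpm) (hZmp : 0 < Zmp) (hZmm : 0 < Zmm)
    (hE1 : 1 ≤ E) (r3' : Zpp * Zmm = E * E * (Zpm * Zmp))
    (hT0 : 0 ≤ T) (hTE : E - 1 ≤ T * (E + 1)) :
    Zpp * Zmm - Zpm * Zmp ≤ T * ((Zpp + Zpm) * (Zmp + Zmm)) := by
  have hQ : 0 < Zpm * Zmp := mul_pos hZpm hZmp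
  have hAB : (Zpp * Zmp) * (Zpm * Zmm) = (E * (Zpm * Zmp)) ^ 2 := by
    linear_combination (Zmp * Zpm) * r3'
  have hkey : (Zpp * Zmp + Zpm * Zmm) ^ 2 ≥ (2 * E * (Zpm * Zmp)) ^ 2 := by
    nlinarith [sq_nonneg (Zpp * Zmp - Zpm * Zmm)]
  have hA : 0 < Zpp * Zmp := mul_pos hZpp hZmp
  have hB : 0 < Zpm * Zmm := mul_pos hZpm hZmm
  have hEQ : 0 < E * (Zpm * Zmp) := mul_pos (by linarith) hQ
  have hsum : 2 * E * (Zpm * Zmp) ≤ Zpp * Zmp + Zpm * Zmm := by nlinarith [hkey]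
  have h2 : (E - 1) * ((E + 1) * (Zpm * Zmp)) ≤ (T * (E + 1)) * ((E + 1) * (Zpm * Zmp)) :=
    mul_le_mul_of_nonneg_right hTE (mul_nonneg (by linarith) hQ.le)
  have h3 : T * (2 * E * (Zpm * Zmp)) ≤ T * (Zpp * Zmp + Zpm * Zmm) :=
    mul_le_mul_of_nonneg_left hsum hT0
  have h1 : Zpp * Zmm - Zpm * Zmp = (E * E - 1) * (Zpm * Zmp) := by linear_combination r3'
  have hexpand : (Zpp + Zpm) * (Zmp + Zmm)
      = Zpp * Zmp + Zpm * Zmm + (E * E) * (Zpm * Zmp) + Zpm * Zmp := by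
    linear_combination r3'
  rw [h1, hexpand]
  nlinarith [h2, h3]

lemma final_algebra (b β' c : ℝ) (hb' : 0 ≤ β') (hβb : β' ≤ b) (hc : 0 ≤ c)
    (Zpp Zpm Zmp Zmm Npp Npm Nmp Nmm : ℝ)
    (hZpp : 0 < Zpp) (hZpm : 0 < Zpm) (hZmp : 0 < Zmp) (hZmm : 0 < Zmm)
    (r1 : Npp * Zmp = Zpp * Nmp) (r2 : Npm * Zmm = Zpm * Nmm)
    (r3 : Zpp * Zmm = Real.exp (4 * β') * (Zpm * Zmp))
    (hp1 : 0 ≤ Npp / Zpp - Npm / Zpm) (hp2 : Npp / Zpp - Npm / Zpm ≤ c) :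
    0 ≤ (Npp + Npm) / (Zpp + Zpm) - (Nmp + Nmm) / (Zmp + Zmm) ∧
      (Npp + Npm) / (Zpp + Zpm) - (Nmp + Nmm) / (Zmp + Zmm) ≤ Real.tanh b * c := by
  have hDp : 0 < Zpp + Zpm := by linarith
  have hDm : 0 < Zmp + Zmm := by linarith
  set p1 := Npp / Zpp with hp1d
  set p2 := Npm / Zpm with hp2d
  have e1 : Npp = p1 * Zpp := by rw [hp1d]; field_simp
  have e2 : Npm = p2 * Zpm := by rw [hp2d]; field_simp
  have e3 : Nmp = p1 * Zmp := by
    rw [hp1d]; rw [div_mul_eq_mul_div, eq_div_iff hZpp.ne']; linarith [r1]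
  have e4 : Nmm = p2 * Zmm := by
    rw [hp2d]; rw [div_mul_eq_mul_div, eq_div_iff hZpm.ne']; linarith [r2]
  have hΔ : (Npp + Npm) / (Zpp + Zpm) - (Nmp + Nmm) / (Zmp + Zmm)
      = (p1 - p2) * ((Zpp * Zmm - Zpm * Zmp) / ((Zpp + Zpm) * (Zmp + Zmm))) := by
    rw [e1, e2, e3, e4]
    field_simp
    ring
  obtain ⟨E, hE⟩ : ∃ y : ℝ, y = Real.exp (2 * β') := ⟨_, rfl⟩
  have hE1 : (1:ℝ) ≤ E := by rw [hE]; exact Real.one_le_exp (by linarith)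
  have hE4 : Real.exp (4 * β') = E * E := by
    rw [hE, ← Real.exp_add]; ring_nf
  have hnum : Zpp * Zmm - Zpm * Zmp = (E * E - 1) * (Zpm * Zmp) := by
    rw [r3, hE4]; ring
  have hQ : 0 < Zpm * Zmp := mul_pos hZpm hZmp
  have hT0 : 0 ≤ Real.tanh b := tanh_nonneg' (by linarith)
  have hEsq : 0 ≤ E * E - 1 := by nlinarith
  have r3' : Zpp * Zmm = (E * E) * (Zpm * Zmp) := by rw [← hE4]; exact r3
  constructor
  · rw [hΔ]
    apply mul_nonneg hp1
    apply div_nonneg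
    · rw [hnum]; exact mul_nonneg hEsq hQ.le
    · positivity
  · rw [hΔ]
    have hR : (Zpp * Zmm - Zpm * Zmp) / ((Zpp + Zpm) * (Zmp + Zmm)) ≤ Real.tanh b := by
      rw [div_le_iff₀ (by positivity)]
      have hTE : E - 1 ≤ Real.tanh b * (E + 1) := by
        rw [tanh_eq']
        obtain ⟨F, hF⟩ : ∃ y : ℝ, y = Real.exp (2 * b) := ⟨_, rfl⟩
        rw [← hF]
        have hEF : E ≤ F := by rw [hE, hF]; exact Real.exp_le_exp.mpr (by linarith)
        have hF0 : (0:ℝ) < F + 1 := by nlinarith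
        rw [div_mul_eq_mul_div, le_div_iff₀ hF0]
        nlinarith
      exact core_ineq E (Real.tanh b) Zpp Zpm Zmp Zmm hZpp hZpm hZmp hZmm hE1 r3' hT0 hTE
    have hR0 : 0 ≤ (Zpp * Zmm - Zpm * Zmp) / ((Zpp + Zpm) * (Zmp + Zmm)) := by
      apply div_nonneg
      · rw [hnum]; exact mul_nonneg hEsq hQ.le
      · positivity
    calc (p1 - p2) * ((Zpp * Zmm - Zpm * Zmp) / ((Zpp + Zpm) * (Zmp + Zmm)))
        ≤ c * Real.tanh b := mul_le_mul hp2 hR hR0 hc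
      _ = Real.tanh b * c := by ring

lemma spin_of_true {σ : V → Bool} {x : V} (hx : σ x = true) : spin σ x = 1 := by
  simp [spin, hx]

lemma spin_of_false {σ : V → Bool} {x : V} (hx : σ x = false) : spin σ x = -1 := by
  simp [spin, hx]

lemma single_flip (G : SimpleGraph V) (hT : G.IsTree)
    (β : V → V → ℝ) (hsym : ∀ u v, β u v = β v u)
    (b : ℝ) (hb : 0 ≤ b) (hβ : ∀ u v, 0 ≤ β u v ∧ β u v ≤ b) (h : V → ℝ) :
    ∀ n : ℕ, ∀ (Λ : Finset V) (η : V → Bool) (u v : V), u ∈ Λ → G.dist u v = n →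
      0 ≤ condProbPlus G β h v Λ (Function.update η u true)
          - condProbPlus G β h v Λ (Function.update η u false) ∧
        condProbPlus G β h v Λ (Function.update η u true)
          - condProbPlus G β h v Λ (Function.update η u false) ≤ Real.tanh b ^ n := by
  intro n
  induction n using Nat.strong_induction_on with
  | _ n IH =>
  intro Λ η u v hu hd
  have htanh0 : 0 ≤ Real.tanh b := tanh_nonneg' hb
  by_cases hvu : v = u
  · subst hvu
    have hd0 : n = 0 := by rw [← hd, SimpleGraph.dist_self]
    subst hd0
    rw [condProbPlus_of_mem hu, condProbPlus_of_mem hu, Function.update_self,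
      Function.update_self]
    norm_num
  by_cases hvΛ : v ∈ Λ
  · rw [condProbPlus_of_mem hvΛ, condProbPlus_of_mem hvΛ, Function.update_of_ne hvu,
      Function.update_of_ne hvu]
    rw [sub_self]
    exact ⟨le_refl 0, pow_nonneg htanh0 n⟩
  -- main case : v ∉ Λ
  obtain ⟨w, hadj, hdw, p, hpu, hpw, hpv, hcross⟩ := exists_next hT u v hvu
  have huw : u ≠ w := hadj.ne
  have hwu : w ≠ u := fun e => huw e.symm
  have hFv : ∀ σ τ : V → Bool, (∀ x, ¬ p x → σ x = τ x) → Fv v σ = Fv v τ := by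
    intro σ τ hστ
    rw [Fv, Fv, hστ v hpv]
  have hF1 : ∀ σ τ : V → Bool, (∀ x, ¬ p x → σ x = τ x) →
      (fun _ : V → Bool => (1:ℝ)) σ = (fun _ : V → Bool => (1:ℝ)) τ := fun _ _ _ => rfl
  by_cases hwΛ : w ∈ Λ
  · -- w already fixed by the boundary: the two probabilities agree
    have hswap := swap_identity G β h hsym p u w hadj hpu hpw hcross Λ hu hwΛ
      (Function.update η u true) (Function.update η u false)
      (fun x _ hxu _ => by rw [Function.update_of_ne hxu, Function.update_of_ne hxu])
      (Fv v) (fun _ => 1) hFv hF1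
    have e1 : Function.update η u true w = η w := Function.update_of_ne hwu _ _
    have e2 : Function.update η u false w = η w := Function.update_of_ne hwu _ _
    have h0 : spin (Function.update η u true) w - spin (Function.update η u false) w = 0 := by
      rw [spin_eq (e1.trans e2.symm)]; ring
    rw [h0, mul_zero, mul_zero, Real.exp_zero, one_mul] at hswap
    have hupA : Function.update (Function.update η u true) w (Function.update η u false w)
        = Function.update η u true := by
      rw [e2, ← e1, Function.update_eq_self]
    have hupB : Function.update (Function.update η u false) w (Function.update η u true w)
        = Function.update η u false := by
      rw [e1, ← e2, Function.update_eq_self]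
    rw [hupA, hupB] at hswap
    rw [condProbPlus_eq_S, condProbPlus_eq_S]
    have hZ1 : 0 < S G β h Λ (Function.update η u true) (fun _ => 1) := S_one_pos _ _
    have hZ2 : 0 < S G β h Λ (Function.update η u false) (fun _ => 1) := S_one_pos _ _
    have heq : S G β h Λ (Function.update η u true) (Fv v) / S G β h Λ (Function.update η u true) (fun _ => 1)
        = S G β h Λ (Function.update η u false) (Fv v) / S G β h Λ (Function.update η u false) (fun _ => 1) := by
      rw [div_eq_div_iff hZ1.ne' hZ2.ne']
      linarith [hswap]
    rw [heq, sub_self]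
    exact ⟨le_refl 0, pow_nonneg htanh0 n⟩
  · -- w is free: condition on σ w and use the factorization
    have hu' : u ∈ insert w Λ := Finset.mem_insert_of_mem hu
    have hw' : w ∈ insert w Λ := Finset.mem_insert_self w Λ
    have hηside : ∀ (s₁ s₂ : Bool) (t₁ t₂ : Bool), ∀ x ∈ insert w Λ, x ≠ u → x ≠ w →
        Function.update (Function.update η u s₁) w t₁ x
          = Function.update (Function.update η u s₂) w t₂ x := by
      intro s₁ s₂ t₁ t₂ x _ hxu hxw
      rw [Function.update_of_ne hxw, Function.update_of_ne hxw, Function.update_of_ne hxu,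
        Function.update_of_ne hxu]
    -- the two "same t" swap relations
    have hr : ∀ t : Bool,
        S G β h (insert w Λ) (Function.update (Function.update η u true) w t) (Fv v)
          * S G β h (insert w Λ) (Function.update (Function.update η u false) w t) (fun _ => 1)
        = S G β h (insert w Λ) (Function.update (Function.update η u true) w t) (fun _ => 1)
          * S G β h (insert w Λ) (Function.update (Function.update η u false) w t) (Fv v) := by
      intro t
      have hswap := swap_identity G β h hsym p u w hadj hpu hpw hcross (insert w Λ) hu' hw'
        (Function.update (Function.update η u true) w t)
        (Function.update (Function.update η u false) w t)
        (hηside true false t t) (Fv v) (fun _ => 1) hFv hF1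
      have h0 : spin (Function.update (Function.update η u true) w t) w
          - spin (Function.update (Function.update η u false) w t) w = 0 := by
        rw [spin_eq (show Function.update (Function.update η u true) w t w
          = Function.update (Function.update η u false) w t w by
            rw [Function.update_self, Function.update_self])]
        ring
      rw [h0, mul_zero, mul_zero, Real.exp_zero, one_mul] at hswap
      have hupA : Function.update (Function.update (Function.update η u true) w t) w
          (Function.update (Function.update η u false) w t w)
          = Function.update (Function.update η u true) w t := by
        rw [Function.update_self, Function.update_idem]
      have hupB : Function.update (Function.update (Function.update η u false) w t) w
          (Function.update (Function.update η u true) w t w)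
          = Function.update (Function.update η u false) w t := by
        rw [Function.update_self, Function.update_idem]
      rw [hupA, hupB] at hswap
      exact hswap
    -- the crossed swap relation
    have hr3 :
        S G β h (insert w Λ) (Function.update (Function.update η u true) w true) (fun _ => 1)
          * S G β h (insert w Λ) (Function.update (Function.update η u false) w false) (fun _ => 1)
        = Real.exp (4 * β u w)
          * (S G β h (insert w Λ) (Function.update (Function.update η u true) w false) (fun _ => 1)
            * S G β h (insert w Λ) (Function.update (Function.update η u false) w true) (fun _ => 1)) := by
      have hswap := swap_identity G β h hsym p u w hadj hpu hpw hcross (insert w Λ) hu' hw'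
        (Function.update (Function.update η u true) w true)
        (Function.update (Function.update η u false) w false)
        (hηside true false true false) (fun _ => 1) (fun _ => 1) hF1 hF1
      have s1 : spin (Function.update (Function.update η u true) w true) u = 1 :=
        spin_of_true (by rw [Function.update_of_ne huw, Function.update_self])
      have s2 : spin (Function.update (Function.update η u false) w false) u = -1 :=
        spin_of_false (by rw [Function.update_of_ne huw, Function.update_self])
      have s3 : spin (Function.update (Function.update η u true) w true) w = 1 :=
        spin_of_true (Function.update_self _ _ _)
      have s4 : spin (Function.update (Function.update η u false) w false) w = -1 :=
        spin_of_false (Function.update_self _ _ _)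
      rw [s1, s2, s3, s4] at hswap
      rw [show β u w * ((1 - -1) * (1 - -1)) = 4 * β u w by ring] at hswap
      have hupA : Function.update (Function.update (Function.update η u true) w true) w
          (Function.update (Function.update η u false) w false w)
          = Function.update (Function.update η u true) w false := by
        rw [Function.update_self, Function.update_idem]
      have hupB : Function.update (Function.update (Function.update η u false) w false) w
          (Function.update (Function.update η u true) w true w)
          = Function.update (Function.update η u false) w true := by
        rw [Function.update_self, Function.update_idem]
      rw [hupA, hupB] at hswap
      exact hswap
    -- express the conditional probabilities via split sums
    have hcp : ∀ s : Bool, condProbPlus G β h v Λ (Function.update η u s)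
        = (S G β h (insert w Λ) (Function.update (Function.update η u s) w true) (Fv v)
            + S G β h (insert w Λ) (Function.update (Function.update η u s) w false) (Fv v))
          / (S G β h (insert w Λ) (Function.update (Function.update η u s) w true) (fun _ => 1)
            + S G β h (insert w Λ) (Function.update (Function.update η u s) w false) (fun _ => 1)) := by
      intro s
      rw [condProbPlus_eq_S, S_split Λ hwΛ (Function.update η u s) (Fv v),
        S_split Λ hwΛ (Function.update η u s) (fun _ => 1)]
    -- induction hypothesis at w
    have hm : G.dist w v < n := by omega
    have hIH := IH (G.dist w v) hm (insert w Λ) (Function.update η u true) w v hw' rfl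
    rw [condProbPlus_eq_S, condProbPlus_eq_S] at hIH
    -- apply the algebra lemma
    have halg := final_algebra b (β u w) (Real.tanh b ^ G.dist w v)
      (hβ u w).1 (hβ u w).2 (pow_nonneg htanh0 _)
      (S G β h (insert w Λ) (Function.update (Function.update η u true) w true) (fun _ => 1))
      (S G β h (insert w Λ) (Function.update (Function.update η u true) w false) (fun _ => 1))
      (S G β h (insert w Λ) (Function.update (Function.update η u false) w true) (fun _ => 1))
      (S G β h (insert w Λ) (Function.update (Function.update η u false) w false) (fun _ => 1))
      (S G β h (insert w Λ) (Function.update (Function.update η u true) w true) (Fv v))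
      (S G β h (insert w Λ) (Function.update (Function.update η u true) w false) (Fv v))
      (S G β h (insert w Λ) (Function.update (Function.update η u false) w true) (Fv v))
      (S G β h (insert w Λ) (Function.update (Function.update η u false) w false) (Fv v))
      (S_one_pos _ _) (S_one_pos _ _) (S_one_pos _ _) (S_one_pos _ _)
      (hr true) (hr false) hr3 hIH.1 hIH.2
    rw [hcp true, hcp false]
    refine ⟨halg.1, ?_⟩
    have hn : n = G.dist w v + 1 := by omega
    rw [hn, pow_succ]
    calc _ ≤ Real.tanh b * Real.tanh b ^ G.dist w v := halg.2
      _ = Real.tanh b ^ G.dist w v * Real.tanh b := by ring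

end IsingAux

open IsingAux in
/-- For the ferromagnetic Ising model on a finite tree with interactions
`0 ≤ β_{uv} ≤ b` and arbitrary external fields, if `η⁺, η⁻` are boundary conditions on
`Λ` differing exactly on `U ⊆ Λ` with `η⁺ ≡ +`, `η⁻ ≡ −` on `U`, then
`0 ≤ P(σ_v = + | η⁺) − P(σ_v = + | η⁻) ≤ Σ_{u∈U} (tanh b)^{d(u,v)}`. -/
theorem ising_tree_boundary_effect {V : Type*} [Fintype V] [DecidableEq V]
    (G : SimpleGraph V) (hT : G.IsTree)
    (β : V → V → ℝ) (hsym : ∀ u v, β u v = β v u)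
    (b : ℝ) (hb : 0 ≤ b) (hβ : ∀ u v, 0 ≤ β u v ∧ β u v ≤ b)
    (h : V → ℝ) (U Λ : Finset V) (hUΛ : U ⊆ Λ) (v : V)
    (ηp ηm : V → Bool)
    (hU : ∀ u ∈ U, ηp u = true ∧ ηm u = false)
    (hagree : ∀ u ∈ Λ, u ∉ U → ηp u = ηm u) :
    0 ≤ condProbPlus G β h v Λ ηp - condProbPlus G β h v Λ ηm ∧
      condProbPlus G β h v Λ ηp - condProbPlus G β h v Λ ηm
        ≤ ∑ u ∈ U, Real.tanh b ^ (G.dist u v) := by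
  classical
  set interp : Finset V → (V → Bool) :=
    fun S x => if x ∈ U \ S then false else ηp x with hinterp
  have main : ∀ S : Finset V, S ⊆ U →
      0 ≤ condProbPlus G β h v Λ (interp S) - condProbPlus G β h v Λ (interp ∅) ∧
      condProbPlus G β h v Λ (interp S) - condProbPlus G β h v Λ (interp ∅)
        ≤ ∑ u ∈ S, Real.tanh b ^ (G.dist u v) := by
    intro S
    induction S using Finset.induction_on with
    | empty => intro _; simp
    | @insert a S ha IHS =>
      intro hins
      have haU : a ∈ U := hins (Finset.mem_insert_self a S)
      have hSU : S ⊆ U := fun x hx => hins (Finset.mem_insert_of_mem hx)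
      have e1 : interp (insert a S) = Function.update (interp S) a true := by
        funext x
        by_cases hxa : x = a
        · subst hxa
          rw [Function.update_self, hinterp]
          simp only
          rw [if_neg (by simp)]
          exact (hU x haU).1
        · rw [Function.update_of_ne hxa, hinterp]
          simp only
          by_cases hxUS : x ∈ U \ S
          · rw [if_pos (Finset.mem_sdiff.mpr ⟨(Finset.mem_sdiff.mp hxUS).1,
              fun hc => (Finset.mem_insert.mp hc).elim hxa (Finset.mem_sdiff.mp hxUS).2⟩),
              if_pos hxUS]
          · rw [if_neg (fun hc => hxUS (Finset.mem_sdiff.mpr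
              ⟨(Finset.mem_sdiff.mp hc).1,
                fun hs => (Finset.mem_sdiff.mp hc).2 (Finset.mem_insert_of_mem hs)⟩)),
              if_neg hxUS]
      have e2 : interp S = Function.update (interp S) a false := by
        funext x
        by_cases hxa : x = a
        · subst hxa
          rw [Function.update_self, hinterp]
          simp only
          rw [if_pos (Finset.mem_sdiff.mpr ⟨haU, ha⟩)]
        · rw [Function.update_of_ne hxa]
      have hstep := single_flip G hT β hsym b hb hβ h (G.dist a v) Λ (interp S) a v
        (hUΛ haU) rfl
      rw [← e1, ← e2] at hstep
      have hsum : ∑ u ∈ insert a S, Real.tanh b ^ (G.dist u v)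
          = Real.tanh b ^ (G.dist a v) + ∑ u ∈ S, Real.tanh b ^ (G.dist u v) :=
        Finset.sum_insert ha
      obtain ⟨hI1, hI2⟩ := IHS hSU
      constructor
      · linarith [hstep.1]
      · rw [hsum]; linarith [hstep.2]
  have hfin := main U (subset_refl U)
  have hp_eq : condProbPlus G β h v Λ ηp = condProbPlus G β h v Λ (interp U) := by
    apply condProbPlus_congr
    intro x _
    rw [hinterp]
    simp
  have hm_eq : condProbPlus G β h v Λ ηm = condProbPlus G β h v Λ (interp ∅) := by
    apply condProbPlus_congr
    intro x hx
    rw [hinterp]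
    simp only [Finset.sdiff_empty]
    by_cases hxU : x ∈ U
    · rw [if_pos hxU]
      exact (hU x hxU).2
    · rw [if_neg hxU]
      exact (hagree x hx hxU).symm
  rw [hp_eq, hm_eq]
  exact hfin
end

section
/- Let X ~ Poisson(d) and, conditionally on X = x, let Y_1,...,Y_x be i.i.d. Poisson(d), with order statistics Y_{(1)} ≤ ... ≤ Y_{(x)}. Define W = X + max_{1 ≤ i ≤ X}(Y_{(i)} − i) (with W = X if X = 0). Then there exists a constant C = C(d) such that W is stochastically dominated by C + Poisson(d), i.e., P(W ≥ w + C) ≤ P(Poisson(d) ≥ w) for all integers w ≥ 0. -/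
open MeasureTheory ProbabilityTheory Finset
open scoped NNReal ENNReal Nat

/-- The sorted list (in increasing order) of the values `Y_1(ω),…,Y_x(ω)`. -/
noncomputable def sortedVals {Ω : Type*} (Y : ℕ → Ω → ℕ) (x : ℕ) (ω : Ω) : List ℕ :=
  Multiset.sort ((List.range x).map fun j => Y j ω : Multiset ℕ) (· ≤ ·)

/-- `W = X + max_{1 ≤ i ≤ X}(Y_{(i)} − i)` (and `W = X` if `X = 0`), where
`Y_{(1)} ≤ … ≤ Y_{(X)}` are the order statistics of `Y_1,…,Y_X`. -/
noncomputable def Wstat {Ω : Type*} (X : Ω → ℕ) (Y : ℕ → Ω → ℕ) (ω : Ω) : ℤ :=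
  (X ω : ℤ) +
    if h : 1 ≤ X ω then
      (Finset.Icc 1 (X ω)).sup' (Finset.nonempty_Icc.mpr h)
        (fun i => ((sortedVals Y (X ω) ω).getD (i - 1) 0 : ℤ) - (i : ℤ))
    else 0

/-- factorial ratio bound : `v! ≤ v^(j-1) * (v+1-j)!` for `1 ≤ j ≤ v`. -/
lemma fact_le_pow_mul : ∀ j v : ℕ, 1 ≤ j → j ≤ v → (v)! ≤ v ^ (j - 1) * (v + 1 - j)! := by
  intro j
  induction j with
  | zero => intro v h; omega
  | succ j ih =>
    intro v h1 h2
    rcases Nat.eq_zero_or_pos j with hj0 | hj0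
    · subst hj0; simpa using Nat.le_refl _
    · have hj2 : j ≤ v := by omega
      have h3 := ih v hj0 hj2
      have h4 : v + 1 - j = (v - j) + 1 := by omega
      have h5 : (v + 1 - j)! = (v + 1 - j) * (v - j)! := by
        rw [h4, Nat.factorial_succ]
      calc (v)! ≤ v ^ (j - 1) * ((v + 1 - j) * (v - j)!) := by rw [← h5]; exact h3
        _ ≤ v ^ (j - 1) * (v * (v - j)!) :=
            Nat.mul_le_mul_left _ (Nat.mul_le_mul_right _ (by omega))
        _ = v ^ (j - 1) * v * (v - j)! := by ring
        _ = v ^ (j + 1 - 1) * (v + 1 - (j + 1))! := by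
            rw [← pow_succ]
            congr 2 <;> omega

/-- partial sums of the exponential series over arbitrary finsets. -/
lemma sum_div_fact_le_exp (c : ℝ) (hc : 0 ≤ c) (F : Finset ℕ) :
    ∑ j ∈ F, c ^ j / (j)! ≤ Real.exp c := by
  classical
  have hsub : F ⊆ Finset.range (F.sup id + 1) := fun x hx =>
    Finset.mem_range.mpr (Nat.lt_succ_of_le (Finset.le_sup (f := id) hx))
  calc ∑ j ∈ F, c ^ j / (j)!
      ≤ ∑ j ∈ Finset.range (F.sup id + 1), c ^ j / (j)! :=
        Finset.sum_le_sum_of_subset_of_nonneg hsub (by intro i _ _; positivity)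
    _ ≤ Real.exp c := Real.sum_le_exp_of_nonneg hc _

lemma sum_shift_le_exp (c : ℝ) (hc : 0 ≤ c) (a : ℕ) (F : Finset ℕ) :
    ∑ k ∈ F.filter (a ≤ ·), c ^ (k - a) / ((k - a))! ≤ Real.exp c := by
  classical
  have h := Finset.sum_image (s := F.filter (a ≤ ·)) (g := (· - a))
    (f := fun j => c ^ j / ((j))!)
    (by intro x hx y hy hxy
        simp only [Finset.mem_coe, Finset.mem_filter] at hx hy
        dsimp only at hxy
        omega)
  rw [← h]
  exact sum_div_fact_le_exp c hc _


lemma measNat (s : Set ℕ) : MeasurableSet s := by measurability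

lemma poissonPMF_apply (d : ℝ≥0) (n : ℕ) :
    poissonPMF d n = ENNReal.ofReal (Real.exp (-(d : ℝ)) * (d : ℝ) ^ n / (n)!) := rfl

/-- upper bound on the Poisson tail: `Q(s) ≤ d^s/s!`. -/
lemma poisson_tail_le (d : ℝ≥0) (s : ℕ) :
    (poissonPMF d).toMeasure {k | s ≤ k} ≤ ENNReal.ofReal ((d : ℝ) ^ s / (s)!) := by
  classical
  set D : ℝ := (d : ℝ) with hD
  have hD0 : 0 ≤ D := d.coe_nonneg
  rw [PMF.toMeasure_apply _ (measNat _), ENNReal.tsum_eq_iSup_sum]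
  refine iSup_le fun F => ?_
  have h1 : ∀ k ∈ F, Set.indicator {k : ℕ | s ≤ k} (poissonPMF d) k
      = if s ≤ k then ENNReal.ofReal (Real.exp (-D) * D ^ k / (k)!) else 0 := by
    intro k _
    by_cases h : s ≤ k <;> simp [Set.indicator, h, poissonPMF_apply, hD]
  rw [Finset.sum_congr rfl h1, ← Finset.sum_filter]
  have h2 : ∀ k ∈ F.filter (s ≤ ·), ENNReal.ofReal (Real.exp (-D) * D ^ k / (k)!)
      ≤ ENNReal.ofReal (D ^ s / (s)! * Real.exp (-D) * (D ^ (k - s) / ((k - s))!)) := by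
    intro k hk
    have hks : s ≤ k := (Finset.mem_filter.mp hk).2
    apply ENNReal.ofReal_le_ofReal
    have hpow : D ^ k = D ^ s * D ^ (k - s) := by
      rw [← pow_add]; congr 1; omega
    have hfle : ((s)! * ((k - s))! : ℕ) ≤ (k)! :=
      Nat.le_of_dvd (Nat.factorial_pos _) (Nat.factorial_mul_factorial_dvd_factorial hks)
    have hcast : ((s)! * ((k - s))! : ℝ) ≤ ((k)! : ℝ) := by exact_mod_cast hfle
    calc Real.exp (-D) * D ^ k / (k)!
        ≤ Real.exp (-D) * D ^ k / (((s)! : ℝ) * ((k - s))!) := by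
          apply div_le_div_of_nonneg_left (by positivity) (by positivity)
          · exact_mod_cast hcast
      _ = D ^ s / (s)! * Real.exp (-D) * (D ^ (k - s) / ((k - s))!) := by
          rw [hpow]; ring
  calc ∑ k ∈ F.filter (s ≤ ·), ENNReal.ofReal (Real.exp (-D) * D ^ k / (k)!)
      ≤ ∑ k ∈ F.filter (s ≤ ·),
          ENNReal.ofReal (D ^ s / (s)! * Real.exp (-D) * (D ^ (k - s) / ((k - s))!)) :=
        Finset.sum_le_sum h2
    _ = ENNReal.ofReal (∑ k ∈ F.filter (s ≤ ·),
          D ^ s / (s)! * Real.exp (-D) * (D ^ (k - s) / ((k - s))!)) := by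
        rw [ENNReal.ofReal_sum_of_nonneg]
        intro i _; positivity
    _ ≤ ENNReal.ofReal (D ^ s / (s)! * Real.exp (-D) * Real.exp D) := by
        apply ENNReal.ofReal_le_ofReal
        rw [← Finset.mul_sum]
        exact mul_le_mul_of_nonneg_left (sum_shift_le_exp D hD0 s F) (by positivity)
    _ = ENNReal.ofReal (D ^ s / (s)!) := by
        rw [mul_assoc, ← Real.exp_add]; simp

/-- Poisson factorial moment bound: `∑ C(x,m) P(X=x) ≤ d^m/m!` over any finset. -/
lemma poisson_choose_sum_le (d : ℝ≥0) (m : ℕ) (F : Finset ℕ) :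
    ∑ x ∈ F, (x.choose m : ℝ≥0∞) * poissonPMF d x ≤ ENNReal.ofReal ((d : ℝ) ^ m / (m)!) := by
  classical
  set D : ℝ := (d : ℝ) with hD
  have hD0 : 0 ≤ D := d.coe_nonneg
  have h1 : ∀ x ∈ F, (x.choose m : ℝ≥0∞) * poissonPMF d x
      = ENNReal.ofReal ((x.choose m : ℝ) * (Real.exp (-D) * D ^ x / (x)!)) := by
    intro x _
    rw [poissonPMF_apply, ← ENNReal.ofReal_natCast, ← ENNReal.ofReal_mul (by positivity)]
  rw [Finset.sum_congr rfl h1, ← ENNReal.ofReal_sum_of_nonneg (by intro i _; positivity)]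
  apply ENNReal.ofReal_le_ofReal
  have h2 : ∑ x ∈ F, (x.choose m : ℝ) * (Real.exp (-D) * D ^ x / (x)!)
      = ∑ x ∈ F.filter (m ≤ ·), (x.choose m : ℝ) * (Real.exp (-D) * D ^ x / (x)!) := by
    rw [Finset.sum_filter_of_ne]
    intro x _ hne
    by_contra h
    have : x.choose m = 0 := Nat.choose_eq_zero_of_lt (by omega)
    rw [this] at hne; simp at hne
  rw [h2]
  have h3 : ∀ x ∈ F.filter (m ≤ ·), (x.choose m : ℝ) * (Real.exp (-D) * D ^ x / (x)!)
      = D ^ m / (m)! * Real.exp (-D) * (D ^ (x - m) / ((x - m))!) := by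
    intro x hx
    have hmx : m ≤ x := (Finset.mem_filter.mp hx).2
    have hfact : ((x)! : ℝ) = (x.choose m : ℝ) * (m)! * ((x - m))! := by
      exact_mod_cast (Nat.choose_mul_factorial_mul_factorial hmx).symm
    have hpow : D ^ x = D ^ m * D ^ (x - m) := by rw [← pow_add]; congr 1; omega
    have hch : (0 : ℝ) < (x.choose m : ℝ) := by exact_mod_cast Nat.choose_pos hmx
    rw [hfact, hpow]
    have hm0 : ((m)! : ℝ) ≠ 0 := by positivity
    have hxm0 : (((x - m))! : ℝ) ≠ 0 := by positivity
    field_simp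
  rw [Finset.sum_congr rfl h3, ← Finset.mul_sum]
  calc D ^ m / (m)! * Real.exp (-D) * (∑ x ∈ F.filter (m ≤ ·), D ^ (x - m) / ((x - m))!)
      ≤ D ^ m / (m)! * Real.exp (-D) * Real.exp D :=
        mul_le_mul_of_nonneg_left (sum_shift_le_exp D hD0 m F) (by positivity)
    _ = D ^ m / (m)! := by rw [mul_assoc, ← Real.exp_add]; simp

/-- lower bound: the point mass at `w` bounds the tail from below. -/
lemma poisson_tail_ge (d : ℝ≥0) (w : ℕ) :
    ENNReal.ofReal (Real.exp (-(d : ℝ)) * (d : ℝ) ^ w / (w)!)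
      ≤ (poissonPMF d).toMeasure {k | w ≤ k} := by
  have h1 : (poissonPMF d).toMeasure {w} = poissonPMF d w :=
    PMF.toMeasure_apply_singleton _ _ (measNat _)
  rw [← poissonPMF_apply, ← h1]
  exact measure_mono (by intro k hk; simp at hk ⊢; omega)

/-- the tail beyond 1 is at most `1 - e^{-d}`. -/
lemma poisson_tail_le_one (d : ℝ≥0) (s : ℕ) (hs : 1 ≤ s) :
    (poissonPMF d).toMeasure {k | s ≤ k} ≤ ENNReal.ofReal (1 - Real.exp (-(d : ℝ))) := by
  have hmono : (poissonPMF d).toMeasure {k | s ≤ k} ≤ (poissonPMF d).toMeasure {k | 1 ≤ k} :=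
    measure_mono (fun k hk => by simp at hk ⊢; omega)
  refine hmono.trans ?_
  have hset : {k : ℕ | 1 ≤ k} = ({0} : Set ℕ)ᶜ := by ext k; simp; omega
  rw [hset, prob_compl_eq_one_sub (measNat _),
    PMF.toMeasure_apply_singleton _ _ (measNat _), poissonPMF_apply]
  have hexp : Real.exp (-(d : ℝ)) * (d : ℝ) ^ 0 / (0)! = Real.exp (-(d : ℝ)) := by simp
  rw [hexp, ← ENNReal.ofReal_one, ← ENNReal.ofReal_sub _ (Real.exp_nonneg _)]


lemma pointwise_bound {Ω : Type*} (X : Ω → ℕ) (Y : ℕ → Ω → ℕ) (ω : Ω) (v : ℕ)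
    (hv : 1 ≤ v) (hxv : X ω ≤ v) (hW : (v : ℤ) ≤ Wstat X Y ω) :
    ∃ m, 1 ≤ m ∧ m ≤ X ω ∧
      m ≤ ((Finset.range (X ω)).filter (fun j => v + 1 - m ≤ Y j ω)).card := by
  classical
  unfold Wstat at hW
  by_cases h : 1 ≤ X ω
  swap
  · rw [dif_neg h] at hW
    omega
  rw [dif_pos h] at hW
  set L : List ℕ := sortedVals Y (X ω) ω with hL
  have h2 : (v : ℤ) - (X ω) ≤ (Finset.Icc 1 (X ω)).sup' (Finset.nonempty_Icc.mpr h)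
      (fun i => ((L.getD (i - 1) 0 : ℕ) : ℤ) - (i : ℤ)) := by omega
  obtain ⟨i, hi, hle⟩ := (Finset.le_sup'_iff _).mp h2
  rw [Finset.mem_Icc] at hi
  set m := (X ω) + 1 - i with hm
  set t := v + 1 - m with ht
  refine ⟨m, by omega, by omega, ?_⟩
  -- `t ≤ L.getD (i-1) 0`
  have htZ : (t : ℤ) = (v : ℤ) + i - (X ω) := by omega
  have htL : (t : ℤ) ≤ (L.getD (i - 1) 0 : ℤ) := by omega
  have htLn : t ≤ L.getD (i - 1) 0 := by exact_mod_cast htL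
  have hlen : L.length = (X ω) := by
    simp [hL, sortedVals]
  have hsorted : L.Pairwise (· ≤ ·) := Multiset.pairwise_sort ..
  have hi1 : i - 1 < L.length := by omega
  -- all elements of `L.drop (i-1)` are ≥ t
  have hdrop : ∀ a ∈ L.drop (i - 1), t ≤ a := by
    intro a ha
    obtain ⟨p, hp, hpa⟩ := List.mem_iff_getElem.mp ha
    rw [List.getElem_drop] at hpa
    have hfin : (⟨i - 1, hi1⟩ : Fin L.length) ≤ ⟨i - 1 + p, by
        have := hp; rw [List.length_drop] at this; omega⟩ := by
      simp [Fin.le_def]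
    have := hsorted.rel_get_of_le hfin
    rw [List.getD_eq_getElem L 0 hi1] at htLn
    simp only [List.get_eq_getElem] at this
    omega
  -- count of elements ≥ t in L is at least m
  have hcount : m ≤ L.countP (fun a => decide (t ≤ a)) := by
    have hsplit : L.countP (fun a => decide (t ≤ a))
        = (L.take (i - 1)).countP (fun a => decide (t ≤ a))
          + (L.drop (i - 1)).countP (fun a => decide (t ≤ a)) := by
      rw [← List.countP_append, List.take_append_drop]
    have hfull : (L.drop (i - 1)).countP (fun a => decide (t ≤ a))
        = (L.drop (i - 1)).length :=
      List.countP_eq_length.mpr (fun a ha => decide_eq_true (hdrop a ha))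
    rw [hsplit, hfull, List.length_drop, hlen]
    omega
  -- transfer to the filter over `range (X ω)`
  have htrans : ((Finset.range (X ω)).filter (fun j => t ≤ Y j ω)).card
      = L.countP (fun a => decide (t ≤ a)) := by
    have e1 : ((Finset.range (X ω)).filter (fun j => t ≤ Y j ω)).card
        = Multiset.countP (fun j => t ≤ Y j ω) (Finset.range (X ω)).val := by
      rw [Multiset.countP_eq_card_filter]
      rfl
    have e2 : (Finset.range (X ω)).val = ((List.range (X ω)) : Multiset ℕ) := by
      rw [Finset.range_val, Multiset.coe_range]
    rw [e1, e2, Multiset.coe_countP]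
    have e3 : (↑L : Multiset ℕ) = ((List.range (X ω)).map fun j => Y j ω : Multiset ℕ) := by
      rw [hL]; exact Multiset.sort_eq ..
    have e4 : L.countP (fun a => decide (t ≤ a))
        = Multiset.countP (fun a => t ≤ a) (↑L : Multiset ℕ) := by
      rw [Multiset.coe_countP]
    rw [e4, e3, Multiset.coe_countP, List.countP_map]
    rfl
  rw [htrans]
  exact hcount


lemma analytic_bound (d : ℝ≥0) (hd : 0 < d) : ∃ K : ℝ, 0 < K ∧ ∀ v : ℕ, 1 ≤ v →
    (d : ℝ) ^ (v+1) / ((v+1))! + (d : ℝ) * ((d : ℝ) ^ v / (v)!) +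
      ∑ m ∈ Finset.Icc 2 v, ((d : ℝ) ^ m / (m)!) * (1 - Real.exp (-(d : ℝ))) ^ (m - 2)
        * ((d : ℝ) ^ (v + 1 - m) / ((v + 1 - m))!) ^ 2
      ≤ K * ((d : ℝ) ^ v / (v)!) := by
  set D : ℝ := (d : ℝ) with hD
  have hD0 : 0 < D := hd
  set q : ℝ := 1 - Real.exp (-D) with hq
  have hq0 : 0 < q := by
    have : Real.exp (-D) < 1 := Real.exp_lt_one_iff.mpr (by linarith)
    simp only [hq]; linarith
  have hq1 : q < 1 := by
    have := Real.exp_pos (-D)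
    simp only [hq]; linarith
  have hqne : q ≠ 0 := ne_of_gt hq0
  set β : ℝ := -Real.log q with hβdef
  have hβ : 0 < β := by
    have := Real.log_neg hq0 hq1
    simp only [hβdef]; linarith
  set M : ℝ := D ^ 2 * q⁻¹ ^ 2 * Real.exp (D / (q * β)) with hM
  have hM0 : 0 < M := by positivity
  refine ⟨2 * D + M, by positivity, ?_⟩
  intro v hv
  have hfv : (0:ℝ) < (v)! := by exact_mod_cast Nat.factorial_pos v
  have h1 : D ^ (v+1) / ((v+1))! ≤ D * (D ^ v / (v)!) := by
    have hle : ((v)! : ℝ) ≤ (((v+1))! : ℝ) := by exact_mod_cast Nat.factorial_le (by omega)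
    calc D ^ (v+1) / ((v+1))! ≤ D ^ (v+1) / (v)! := by gcongr
      _ = D * (D ^ v / (v)!) := by rw [pow_succ]; ring
  have hsum : ∑ m ∈ Finset.Icc 2 v, (D ^ m / (m)!) * q ^ (m - 2)
        * (D ^ (v + 1 - m) / ((v + 1 - m))!) ^ 2 ≤ M * (D ^ v / (v)!) := by
    rcases lt_or_ge v 2 with hv2 | hv2
    · rw [Finset.Icc_eq_empty (by omega), Finset.sum_empty]
      positivity
    · set g : ℕ → ℝ := fun j => (D ^ v / (v)!) * (D ^ 2 * (D * (v:ℝ)) ^ (j - 1)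
        * q ^ (v - 1 - j) / (((j))! : ℝ) ^ 2) with hg
      have hterm : ∀ m ∈ Finset.Icc 2 v, (D ^ m / (m)!) * q ^ (m - 2)
          * (D ^ (v + 1 - m) / ((v + 1 - m))!) ^ 2 ≤ g (v + 1 - m) := by
        intro m hm
        rw [Finset.mem_Icc] at hm
        set j := v + 1 - m with hj
        have hj1 : 1 ≤ j := by omega
        have hjv : j ≤ v - 1 := by omega
        have hm2 : m - 2 = v - 1 - j := by omega
        have hfj : (0:ℝ) < ((j))! := by exact_mod_cast Nat.factorial_pos j
        have hfm : (0:ℝ) < ((m))! := by exact_mod_cast Nat.factorial_pos m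
        have hDpow : D ^ m * (D ^ j) ^ 2 = D ^ (v + 1 + j) := by
          rw [← pow_mul, ← pow_add]; congr 1; omega
        have hDpow2 : D ^ v * (D ^ 2 * (D * (v:ℝ)) ^ (j - 1))
            = D ^ (v + 1 + j) * (v:ℝ) ^ (j - 1) := by
          have e : v + 2 + (j - 1) = v + 1 + j := by omega
          calc D ^ v * (D ^ 2 * (D * (v:ℝ)) ^ (j - 1))
              = D ^ (v + 2 + (j - 1)) * (v:ℝ) ^ (j - 1) := by
                rw [mul_pow, pow_add, pow_add]; ring
            _ = D ^ (v + 1 + j) * (v:ℝ) ^ (j - 1) := by rw [e]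
        have key : ((v)! : ℝ) ≤ (v:ℝ) ^ (j - 1) * ((m))! := by
          have := fact_le_pow_mul j v hj1 (by omega)
          rw [show v + 1 - j = m by omega] at this
          exact_mod_cast this
        set a : ℝ := D ^ (v + 1 + j) * q ^ (v - 1 - j) with ha
        have ha0 : 0 ≤ a := by positivity
        set c : ℝ := (((j))! : ℝ) ^ 2 with hc
        have hc0 : 0 < c := by positivity
        have eL : (D ^ m / (m)!) * q ^ (m - 2) * (D ^ j / ((j))!) ^ 2
            = a / (((m))! * c) := by
          rw [hm2, ha, ← hDpow, hc]
          ring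
        have eR : g j = a * (v:ℝ) ^ (j - 1) / (((v))! * c) := by
          rw [hg, ha, hc]
          simp only []
          linear_combination (q ^ (v - 1 - j) / ((((v))! : ℝ) * (((j))! : ℝ) ^ 2)) * hDpow2
        rw [eL, eR]
        rw [div_le_div_iff₀ (by positivity) (by positivity)]
        calc a * ((v)! * c) = (a * c) * (v)! := by ring
          _ ≤ (a * c) * ((v:ℝ) ^ (j - 1) * ((m))!) :=
              mul_le_mul_of_nonneg_left key (by positivity)
          _ = a * (v:ℝ) ^ (j - 1) * (((m))! * c) := by ring
      calc ∑ m ∈ Finset.Icc 2 v, (D ^ m / (m)!) * q ^ (m - 2)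
            * (D ^ (v + 1 - m) / ((v + 1 - m))!) ^ 2
          ≤ ∑ m ∈ Finset.Icc 2 v, g (v + 1 - m) := Finset.sum_le_sum hterm
        _ = ∑ j ∈ Finset.Icc 1 (v - 1), g j := by
            apply Finset.sum_nbij' (fun m => v + 1 - m) (fun j => v + 1 - j)
            · intro a ha; rw [Finset.mem_Icc] at *; omega
            · intro a ha; rw [Finset.mem_Icc] at *; omega
            · intro a ha; rw [Finset.mem_Icc] at ha; omega
            · intro a ha; rw [Finset.mem_Icc] at ha; omega
            · intro a ha; rfl
        _ ≤ M * (D ^ v / (v)!) := by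
            obtain ⟨u, hu⟩ : ∃ u : ℝ, u = D * (v:ℝ) / q := ⟨_, rfl⟩
            have hu0 : 0 ≤ u := by rw [hu]; positivity
            have hrw : ∀ j ∈ Finset.Icc 1 (v - 1),
                g j = ((D ^ v / (v)!) * D ^ 2 * q ^ (v - 2)) * (u ^ (j - 1) / (((j))! : ℝ) ^ 2) := by
              intro j hj
              rw [Finset.mem_Icc] at hj
              have e1 : q ^ (v - 1 - j) = q ^ (v - 2) * (q⁻¹) ^ (j - 1) := by
                rw [show v - 1 - j = (v - 2) - (j - 1) by omega, pow_sub₀ q hqne (by omega), inv_pow]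
              rw [hg]
              simp only []
              rw [e1, hu, div_eq_mul_inv (D * (v:ℝ)) q, mul_pow]
              ring
            rw [Finset.sum_congr rfl hrw, ← Finset.mul_sum]
            have hS : ∑ j ∈ Finset.Icc 1 (v - 1), u ^ (j - 1) / (((j))! : ℝ) ^ 2
                ≤ Real.exp (Real.sqrt u) ^ 2 := by
              calc ∑ j ∈ Finset.Icc 1 (v - 1), u ^ (j - 1) / (((j))! : ℝ) ^ 2
                  ≤ ∑ j ∈ Finset.Icc 1 (v - 1), u ^ (j - 1) / ((((j - 1))! : ℝ)) ^ 2 := by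
                    apply Finset.sum_le_sum
                    intro j hj
                    have : ((((j-1))! : ℝ)) ≤ (((j))! : ℝ) := by
                      exact_mod_cast Nat.factorial_le (by omega)
                    gcongr <;>
                      first
                        | positivity
                        | exact_mod_cast Nat.factorial_pos (j-1)
                _ = ∑ i ∈ Finset.range (v - 1), u ^ i / ((((i))! : ℝ)) ^ 2 := by
                    refine Finset.sum_nbij' (fun j => j - 1) (fun i => i + 1) ?_ ?_ ?_ ?_ ?_
                    · intro a ha; rw [Finset.mem_Icc] at ha; rw [Finset.mem_range]; omega
                    · intro a ha; rw [Finset.mem_range] at ha; rw [Finset.mem_Icc]; omega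
                    · intro a ha; rw [Finset.mem_Icc] at ha; omega
                    · intro a ha; rw [Finset.mem_range] at ha; omega
                    · intro a ha; rfl
                _ ≤ (∑ i ∈ Finset.range (v - 1), Real.sqrt u ^ i / (((i))! : ℝ)) ^ 2 := by
                    have hsq := Finset.sum_sq_le_sq_sum_of_nonneg
                      (f := fun i => Real.sqrt u ^ i / (((i))! : ℝ)) (s := Finset.range (v-1))
                      (fun i _ => by positivity)
                    calc ∑ i ∈ Finset.range (v - 1), u ^ i / ((((i))! : ℝ)) ^ 2
                        = ∑ i ∈ Finset.range (v - 1), (Real.sqrt u ^ i / (((i))! : ℝ)) ^ 2 := by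
                          apply Finset.sum_congr rfl
                          intro i _
                          rw [div_pow, ← pow_mul, mul_comm i 2, pow_mul, Real.sq_sqrt hu0]
                      _ ≤ _ := hsq
                _ ≤ Real.exp (Real.sqrt u) ^ 2 := by
                    apply pow_le_pow_left₀ (Finset.sum_nonneg (fun i _ => by positivity))
                    exact sum_div_fact_le_exp _ (Real.sqrt_nonneg u) _
            have hamgm : 2 * Real.sqrt u ≤ β * v + D / (q * β) := by
              have h2ab := two_mul_le_add_sq (Real.sqrt (β * v)) (Real.sqrt (D / (q * β)))
              have hab : Real.sqrt (β * v) * Real.sqrt (D / (q * β)) = Real.sqrt u := by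
                rw [← Real.sqrt_mul (by positivity)]
                congr 1
                rw [hu]
                field_simp
              rw [mul_assoc, hab, Real.sq_sqrt (by positivity), Real.sq_sqrt (by positivity)] at h2ab
              linarith
            have hexp2 : Real.exp (Real.sqrt u) ^ 2 ≤ Real.exp (β * v) * Real.exp (D / (q * β)) := by
              have : Real.exp (Real.sqrt u) ^ 2 = Real.exp (2 * Real.sqrt u) := by
                rw [show (2:ℝ) * Real.sqrt u = ((2:ℕ):ℝ) * Real.sqrt u by norm_num,
                  Real.exp_nat_mul]
              rw [this, ← Real.exp_add]
              exact Real.exp_le_exp.mpr hamgm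
            have hqpow : q ^ (v - 2) * (Real.exp (β * v) * Real.exp (D / (q * β)))
                = q⁻¹ ^ 2 * Real.exp (D / (q * β)) := by
              have e2 : Real.exp (β * v) = (q⁻¹) ^ v := by
                rw [mul_comm β (v:ℝ), Real.exp_nat_mul]
                congr 1
                rw [hβdef, Real.exp_neg, Real.exp_log hq0]
              have e3 : q ^ (v - 2) = q ^ v * (q ^ 2)⁻¹ := pow_sub₀ q hqne hv2
              rw [e2, e3, inv_pow]
              have : q ^ v ≠ 0 := pow_ne_zero _ hqne
              field_simp
            calc (D ^ v / (v)!) * D ^ 2 * q ^ (v - 2)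
                  * (∑ j ∈ Finset.Icc 1 (v - 1), u ^ (j - 1) / (((j))! : ℝ) ^ 2)
                ≤ (D ^ v / (v)!) * D ^ 2 * q ^ (v - 2) * (Real.exp (Real.sqrt u) ^ 2) := by
                  apply mul_le_mul_of_nonneg_left hS (by positivity)
              _ ≤ (D ^ v / (v)!) * D ^ 2 * q ^ (v - 2)
                  * (Real.exp (β * v) * Real.exp (D / (q * β))) := by
                  apply mul_le_mul_of_nonneg_left hexp2 (by positivity)
              _ = (D ^ v / (v)!) * D ^ 2 * (q ^ (v - 2) * (Real.exp (β * v) * Real.exp (D / (q * β)))) := by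
                  ring
              _ = M * (D ^ v / (v)!) := by rw [hqpow, hM]; ring
  linarith


/-- If `X ~ Poisson(d)` and, given `X = x`, `Y_1,…,Y_x` are i.i.d.
Poisson(d), then `W = X + max_{1≤i≤X}(Y_{(i)} − i)` is stochastically dominated by
`C + Poisson(d)` for some constant `C = C(d)`. -/
theorem W_stochastic_domination {Ω : Type*} [MeasurableSpace Ω]
    (μ : Measure Ω) [IsProbabilityMeasure μ] (d : ℝ≥0) (hd : 0 < d)
    (X : Ω → ℕ) (Y : ℕ → Ω → ℕ)
    (hmX : Measurable X) (hmY : ∀ j, Measurable (Y j))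
    (hindep : iIndepFun
      (fun o : Option ℕ => o.elim X Y) μ)
    (hlawX : μ.map X = (poissonPMF d).toMeasure)
    (hlawY : ∀ j, μ.map (Y j) = (poissonPMF d).toMeasure) :
    ∃ C : ℕ, ∀ w : ℕ,
      μ {ω | ((w + C : ℕ) : ℤ) ≤ Wstat X Y ω}
        ≤ (poissonPMF d).toMeasure {k : ℕ | w ≤ k} := by
  classical
  set ν : Measure ℕ := (poissonPMF d).toMeasure with hν
  -- preimage laws
  have hXpre : ∀ s : Set ℕ, μ (X ⁻¹' s) = ν s := by
    intro s
    rw [← Measure.map_apply hmX (measNat s), hlawX]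
  have hYpre : ∀ j (s : Set ℕ), μ (Y j ⁻¹' s) = ν s := by
    intro j s
    rw [← Measure.map_apply (hmY j) (measNat s), hlawY j]
  -- product formula
  have hprod : ∀ (x t : ℕ) (S : Finset ℕ),
      μ (X ⁻¹' {x} ∩ ⋂ j ∈ S, Y j ⁻¹' Set.Ici t)
        = ν {x} * (ν (Set.Ici t)) ^ S.card := by
    intro x t S
    have h := (iIndepFun_iff_measure_inter_preimage_eq_mul.mp hindep)
    set T : Finset (Option ℕ) := insert none (S.image some) with hT
    set sets : (i : Option ℕ) → Set ℕ := fun o => o.elim {x} (fun _ => Set.Ici t) with hsets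
    have hmeas : ∀ i ∈ T, MeasurableSet (sets i) := fun i _ => measNat _
    have hnone : (none : Option ℕ) ∉ S.image some := by simp
    have heq := h T hmeas
    have hset : (⋂ i ∈ T, (fun o : Option ℕ => o.elim X Y) i ⁻¹' sets i)
        = X ⁻¹' {x} ∩ ⋂ j ∈ S, Y j ⁻¹' Set.Ici t := by
      rw [hT, Finset.set_biInter_insert, Finset.set_biInter_finset_image]
      rfl
    have hprodeq : (∏ i ∈ T, μ ((fun o : Option ℕ => o.elim X Y) i ⁻¹' sets i))
        = μ (X ⁻¹' {x}) * ∏ j ∈ S, μ (Y j ⁻¹' Set.Ici t) := by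
      rw [hT, Finset.prod_insert hnone, Finset.prod_image (by intro a _ b _ hab; exact Option.some_injective _ hab)]
      rfl
    rw [hset] at heq
    rw [hprodeq] at heq
    rw [heq, hXpre, Finset.prod_congr rfl (fun j _ => hYpre j (Set.Ici t)), Finset.prod_const]
  -- per-x bound
  have hperx : ∀ (v x : ℕ), 1 ≤ v → x ≤ v →
      μ (X ⁻¹' {x} ∩ {ω | (v : ℤ) ≤ Wstat X Y ω})
        ≤ ∑ m ∈ Finset.Icc 1 v, (x.choose m : ℝ≥0∞) * ν {x}
            * (ν {k | v + 1 - m ≤ k}) ^ m := by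
    intro v x hv hxv
    have hincl : X ⁻¹' {x} ∩ {ω | (v : ℤ) ≤ Wstat X Y ω}
        ⊆ ⋃ m ∈ Finset.Icc 1 v, ⋃ S ∈ Finset.powersetCard m (Finset.range x),
            (X ⁻¹' {x} ∩ ⋂ j ∈ S, Y j ⁻¹' Set.Ici (v + 1 - m)) := by
      rintro ω ⟨hXx, hW⟩
      simp only [Set.mem_preimage, Set.mem_singleton_iff] at hXx
      obtain ⟨m, hm1, hmx, hcard⟩ := pointwise_bound X Y ω v hv (by omega) hW
      rw [hXx] at hmx hcard
      obtain ⟨S, hSsub, hScard⟩ := Finset.exists_subset_card_eq hcard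
      simp only [Set.mem_iUnion]
      refine ⟨m, Finset.mem_Icc.mpr ⟨hm1, by omega⟩, S, ?_, ?_⟩
      · exact Finset.mem_powersetCard.mpr ⟨hSsub.trans (Finset.filter_subset _ _), hScard⟩
      refine ⟨by simp [hXx], ?_⟩
      simp only [Set.mem_iInter]
      intro j hj
      have := Finset.mem_filter.mp (hSsub hj)
      simpa using this.2
    calc μ (X ⁻¹' {x} ∩ {ω | (v : ℤ) ≤ Wstat X Y ω})
        ≤ μ (⋃ m ∈ Finset.Icc 1 v, ⋃ S ∈ Finset.powersetCard m (Finset.range x),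
            (X ⁻¹' {x} ∩ ⋂ j ∈ S, Y j ⁻¹' Set.Ici (v + 1 - m))) := measure_mono hincl
      _ ≤ ∑ m ∈ Finset.Icc 1 v, μ (⋃ S ∈ Finset.powersetCard m (Finset.range x),
            (X ⁻¹' {x} ∩ ⋂ j ∈ S, Y j ⁻¹' Set.Ici (v + 1 - m))) :=
          measure_biUnion_finset_le _ _
      _ ≤ ∑ m ∈ Finset.Icc 1 v, ∑ S ∈ Finset.powersetCard m (Finset.range x),
            μ (X ⁻¹' {x} ∩ ⋂ j ∈ S, Y j ⁻¹' Set.Ici (v + 1 - m)) :=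
          Finset.sum_le_sum (fun m _ => measure_biUnion_finset_le _ _)
      _ = ∑ m ∈ Finset.Icc 1 v, ∑ S ∈ Finset.powersetCard m (Finset.range x),
            ν {x} * (ν (Set.Ici (v + 1 - m))) ^ m := by
          apply Finset.sum_congr rfl
          intro m _
          apply Finset.sum_congr rfl
          intro S hS
          rw [hprod x (v + 1 - m) S, (Finset.mem_powersetCard.mp hS).2]
      _ = ∑ m ∈ Finset.Icc 1 v, (x.choose m : ℝ≥0∞) * ν {x} * (ν {k | v + 1 - m ≤ k}) ^ m := by
          apply Finset.sum_congr rfl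
          intro m _
          rw [Finset.sum_const, Finset.card_powersetCard, Finset.card_range, nsmul_eq_mul,
            mul_assoc]
          rfl
  -- master inequality
  have hmaster : ∀ v : ℕ, 1 ≤ v →
      μ {ω | (v : ℤ) ≤ Wstat X Y ω}
        ≤ ν {k | v + 1 ≤ k} + ∑ m ∈ Finset.Icc 1 v,
            ENNReal.ofReal ((d : ℝ) ^ m / (m)!) * (ν {k | v + 1 - m ≤ k}) ^ m := by
    intro v hv
    have hincl : {ω | (v : ℤ) ≤ Wstat X Y ω}
        ⊆ (X ⁻¹' {k | v + 1 ≤ k}) ∪ ⋃ x ∈ Finset.range (v + 1),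
            (X ⁻¹' {x} ∩ {ω | (v : ℤ) ≤ Wstat X Y ω}) := by
      intro ω hω
      by_cases hX : v + 1 ≤ X ω
      · exact Or.inl hX
      · refine Or.inr ?_
        simp only [Set.mem_iUnion]
        exact ⟨X ω, Finset.mem_range.mpr (by omega), by simp, hω⟩
    calc μ {ω | (v : ℤ) ≤ Wstat X Y ω}
        ≤ μ ((X ⁻¹' {k | v + 1 ≤ k}) ∪ ⋃ x ∈ Finset.range (v + 1),
            (X ⁻¹' {x} ∩ {ω | (v : ℤ) ≤ Wstat X Y ω})) := measure_mono hincl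
      _ ≤ μ (X ⁻¹' {k | v + 1 ≤ k}) + μ (⋃ x ∈ Finset.range (v + 1),
            (X ⁻¹' {x} ∩ {ω | (v : ℤ) ≤ Wstat X Y ω})) := measure_union_le _ _
      _ ≤ ν {k | v + 1 ≤ k} + ∑ x ∈ Finset.range (v + 1),
            μ (X ⁻¹' {x} ∩ {ω | (v : ℤ) ≤ Wstat X Y ω}) := by
          rw [hXpre]
          exact add_le_add_right (measure_biUnion_finset_le _ _) _
      _ ≤ ν {k | v + 1 ≤ k} + ∑ x ∈ Finset.range (v + 1), ∑ m ∈ Finset.Icc 1 v,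
            (x.choose m : ℝ≥0∞) * ν {x} * (ν {k | v + 1 - m ≤ k}) ^ m := by
          apply add_le_add_right
          exact Finset.sum_le_sum (fun x hx =>
            hperx v x hv (by have := Finset.mem_range.mp hx; omega))
      _ = ν {k | v + 1 ≤ k} + ∑ m ∈ Finset.Icc 1 v,
            (∑ x ∈ Finset.range (v + 1), (x.choose m : ℝ≥0∞) * ν {x})
              * (ν {k | v + 1 - m ≤ k}) ^ m := by
          rw [Finset.sum_comm]
          congr 1
          apply Finset.sum_congr rfl
          intro m _
          rw [Finset.sum_mul]
      _ ≤ ν {k | v + 1 ≤ k} + ∑ m ∈ Finset.Icc 1 v,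
            ENNReal.ofReal ((d : ℝ) ^ m / (m)!) * (ν {k | v + 1 - m ≤ k}) ^ m := by
          apply add_le_add_right
          apply Finset.sum_le_sum
          intro m _
          apply mul_le_mul_left
          have : ∀ x ∈ Finset.range (v + 1), (x.choose m : ℝ≥0∞) * ν {x}
              = (x.choose m : ℝ≥0∞) * poissonPMF d x := by
            intro x _
            rw [hν, PMF.toMeasure_apply_singleton _ _ (measNat _)]
          rw [Finset.sum_congr rfl this]
          exact poisson_choose_sum_le d m _
  -- choose the constant C
  obtain ⟨K, hK0, hKb⟩ := analytic_bound d hd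
  have htend := FloorSemiring.tendsto_pow_div_factorial_atTop (K := ℝ) (d : ℝ)
  have hev : ∀ᶠ n in Filter.atTop, (d : ℝ) ^ n / (n)! < Real.exp (-(d : ℝ)) / K := by
    apply htend.eventually_lt_const
    positivity
  obtain ⟨C, hC⟩ := (hev.and (Filter.eventually_ge_atTop 1)).exists
  obtain ⟨hCd, hC1⟩ := hC
  refine ⟨C, fun w => ?_⟩
  set D : ℝ := (d : ℝ) with hD
  have hD0 : (0 : ℝ) < D := hd
  set v : ℕ := w + C with hv
  have hv1 : 1 ≤ v := by omega
  set qb : ℝ := 1 - Real.exp (-D) with hqb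
  have hqb0 : 0 ≤ qb := by
    have : Real.exp (-D) ≤ 1 := Real.exp_le_one_iff.mpr (by linarith)
    simp only [hqb]; linarith
  -- bound each term of the master inequality
  have hIcc : Finset.Icc 1 v = insert 1 (Finset.Icc 2 v) := by
    ext a
    simp only [Finset.mem_Icc, Finset.mem_insert]
    omega
  have h1notin : (1 : ℕ) ∉ Finset.Icc 2 v := by simp
  calc μ {ω | ((v : ℕ) : ℤ) ≤ Wstat X Y ω}
      ≤ ν {k | v + 1 ≤ k} + ∑ m ∈ Finset.Icc 1 v,
          ENNReal.ofReal (D ^ m / (m)!) * (ν {k | v + 1 - m ≤ k}) ^ m := hmaster v hv1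
    _ ≤ ENNReal.ofReal (D ^ (v+1) / ((v+1))!)
        + (ENNReal.ofReal (D * (D ^ v / (v)!))
          + ENNReal.ofReal (∑ m ∈ Finset.Icc 2 v, (D ^ m / (m)!) * qb ^ (m - 2)
              * (D ^ (v + 1 - m) / ((v + 1 - m))!) ^ 2)) := by
        apply add_le_add (poisson_tail_le d (v+1))
        rw [hIcc, Finset.sum_insert h1notin]
        apply add_le_add
        · -- m = 1 term
          have hQv : ν {k | v + 1 - 1 ≤ k} ≤ ENNReal.ofReal (D ^ v / (v)!) := by
            rw [show v + 1 - 1 = v by omega]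
            exact poisson_tail_le d v
          calc ENNReal.ofReal (D ^ 1 / (1)!) * (ν {k | v + 1 - 1 ≤ k}) ^ 1
              ≤ ENNReal.ofReal (D ^ 1 / (1)!) * ENNReal.ofReal (D ^ v / (v)!) := by
                rw [pow_one (ν {k | v + 1 - 1 ≤ k})]
                exact mul_le_mul_right hQv _
            _ = ENNReal.ofReal (D * (D ^ v / (v)!)) := by
                rw [← ENNReal.ofReal_mul (by positivity)]
                norm_num
        · -- m ≥ 2 terms
          rw [ENNReal.ofReal_sum_of_nonneg (fun m _ => by positivity)]
          apply Finset.sum_le_sum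
          intro m hm
          have hm2 : 2 ≤ m := (Finset.mem_Icc.mp hm).1
          have hm3 : m ≤ v := (Finset.mem_Icc.mp hm).2
          have hQsplit : (ν {k | v + 1 - m ≤ k}) ^ m
              ≤ ENNReal.ofReal (qb ^ (m - 2)) * ENNReal.ofReal ((D ^ (v + 1 - m) / ((v + 1 - m))!) ^ 2) := by
            have e1 : (ν {k | v + 1 - m ≤ k}) ^ m
                = (ν {k | v + 1 - m ≤ k}) ^ (m - 2) * (ν {k | v + 1 - m ≤ k}) ^ 2 := by
              rw [← pow_add]
              congr 1
              omega
            rw [e1, ENNReal.ofReal_pow hqb0, ENNReal.ofReal_pow (by positivity)]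
            apply mul_le_mul'
            · exact pow_le_pow_left' (poisson_tail_le_one d _ (by omega)) _
            · exact pow_le_pow_left' (poisson_tail_le d _) _
          calc ENNReal.ofReal (D ^ m / (m)!) * (ν {k | v + 1 - m ≤ k}) ^ m
              ≤ ENNReal.ofReal (D ^ m / (m)!)
                * (ENNReal.ofReal (qb ^ (m - 2)) * ENNReal.ofReal ((D ^ (v + 1 - m) / ((v + 1 - m))!) ^ 2)) :=
                mul_le_mul_right hQsplit _
            _ = ENNReal.ofReal (D ^ m / (m)! * qb ^ (m - 2)
                * (D ^ (v + 1 - m) / ((v + 1 - m))!) ^ 2) := by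
                rw [← ENNReal.ofReal_mul (by positivity), ← ENNReal.ofReal_mul (by positivity),
                  mul_assoc]
    _ = ENNReal.ofReal (D ^ (v+1) / ((v+1))! + (D * (D ^ v / (v)!)
          + ∑ m ∈ Finset.Icc 2 v, (D ^ m / (m)!) * qb ^ (m - 2)
              * (D ^ (v + 1 - m) / ((v + 1 - m))!) ^ 2)) := by
        rw [ENNReal.ofReal_add (by positivity) (by positivity),
          ENNReal.ofReal_add (by positivity) (by positivity)]
    _ ≤ ENNReal.ofReal (K * (D ^ v / (v)!)) := by
        apply ENNReal.ofReal_le_ofReal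
        have := hKb v hv1
        linarith
    _ ≤ ENNReal.ofReal (Real.exp (-D) * D ^ w / (w)!) := by
        apply ENNReal.ofReal_le_ofReal
        have hfsplit : ((w)! : ℝ) * ((C)! : ℝ) ≤ ((v)! : ℝ) := by
          have : ((w)! * (C)! : ℕ) ≤ (v)! :=
            Nat.le_of_dvd (Nat.factorial_pos _) (Nat.factorial_mul_factorial_dvd_factorial_add w C)
          exact_mod_cast this
        have hpow : D ^ v = D ^ w * D ^ C := by rw [← pow_add]
        have hfw : (0 : ℝ) < (w)! := by exact_mod_cast Nat.factorial_pos w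
        have hfC : (0 : ℝ) < (C)! := by exact_mod_cast Nat.factorial_pos C
        have hfv : (0 : ℝ) < (v)! := by exact_mod_cast Nat.factorial_pos v
        calc K * (D ^ v / (v)!)
            ≤ K * (D ^ w * D ^ C / ((w)! * (C)!)) := by
              rw [hpow]
              gcongr
          _ = (D ^ w / (w)!) * (K * (D ^ C / (C)!)) := by ring
          _ ≤ (D ^ w / (w)!) * (K * (Real.exp (-D) / K)) := by
              have hle : D ^ C / (C)! ≤ Real.exp (-D) / K := le_of_lt hCd
              gcongr
          _ = Real.exp (-D) * D ^ w / (w)! := by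
              have hKne : K ≠ 0 := ne_of_gt hK0
              field_simp
    _ ≤ ν {k | w ≤ k} := poisson_tail_ge d w
end
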